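/- arXiv:2103.16416 — 3 statements merged into one kernel-verified Lean document; each statement's English description precedes it below -/
import Mathlib

section
/- Let ≺ be a structured linear order on the vertices of T_φ. Then for every j ∈ {1,…,m}, the number of arcs of the feedback arc set implied by ≺ that have one endpoint in T_j and the other endpoint in one of the modules A_i, B_i, C_i, D_i, E_i, F_i (i ∈ {1,…,n}) is at least (3n−1)·s₁·s₂. -/
/-! ### The tournament `T_φ` of the reduction

A CNF formula `φ` with variables `x_1, …, x_n` and clauses `c_1, …, c_m` in which no
variable occurs twice in a clause is given by its occurrence function
`occ : Fin n → Fin m → Option Bool`, where `occ i j = some true` (resp. `some false`)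
means `x_i` occurs positively (resp. negatively) in `c_j`, and `none` means `x_i`
does not occur in `c_j`. -/

/-- The names of the `6n + m` modules of the tournament `T_φ`. -/
inductive ModName (n m : ℕ) : Type where
  | A : Fin n → ModName n m
  | B : Fin n → ModName n m
  | C : Fin n → ModName n m
  | D : Fin n → ModName n m
  | E : Fin n → ModName n m
  | F : Fin n → ModName n m
  | T : Fin m → ModName n m
  deriving DecidableEq, Fintype

/-- The group (variable index) of a module, if it is a variable module. -/
def grp? {n m : ℕ} : ModName n m → Option (Fin n)
  | .A i => some i
  | .B i => some i
  | .C i => some i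
  | .D i => some i
  | .E i => some i
  | .F i => some i
  | .T _ => none

/-- The clause index of a module, if it is a clause module. -/
def clause? {n m : ℕ} : ModName n m → Option (Fin m)
  | .T j => some j
  | _ => none

/-- The rank of a module within its group: `A = 0, B = 1, C = 2, D = 3, E = 4, F = 5`. -/
def rk {n m : ℕ} : ModName n m → ℕ
  | .A _ => 0
  | .B _ => 1
  | .C _ => 2
  | .D _ => 3
  | .E _ => 4
  | .F _ => 5
  | .T _ => 6

/-- The size of each module: `A_i, B_i, C_i, D_i, F_i` have size `s₁`; `E_i` has size
`s₁ + 2` for `i < n` and `s₁ + 3` for `i = n` (i.e. index `n - 1`); `T_j` has size `s₂`. -/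
def msize (n m s₁ s₂ : ℕ) : ModName n m → ℕ
  | .A _ => s₁
  | .B _ => s₁
  | .C _ => s₁
  | .D _ => s₁
  | .E i => if (i : ℕ) = n - 1 then s₁ + 3 else s₁ + 2
  | .F _ => s₁
  | .T _ => s₂

/-- The vertex set of `T_φ`: a vertex is a module name together with an index inside
the module. -/
abbrev Vtx (n m s₁ s₂ : ℕ) : Type := Σ M : ModName n m, Fin (msize n m s₁ s₂ M)

/-- Whether all arcs go from `T_j` to the variable module of rank `r` of a group `i`
with `occ i j = o`: if `x_i` does not occur in `c_j`, `T_j` beats `A_i ∪ B_i ∪ C_i`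
(ranks 0,1,2); if positively, `T_j` beats `A_i ∪ B_i ∪ F_i` (ranks 0,1,5); if
negatively, `T_j` beats `A_i ∪ C_i ∪ D_i` (ranks 0,2,3). -/
def tBeats : Option Bool → ℕ → Prop
  | none, r => r = 0 ∨ r = 1 ∨ r = 2
  | some true, r => r = 0 ∨ r = 1 ∨ r = 5
  | some false, r => r = 0 ∨ r = 2 ∨ r = 3

/-- The direction of the arcs between two distinct modules of `T_φ`. -/
def modArc {n m : ℕ} (occ : Fin n → Fin m → Option Bool) (M M' : ModName n m) : Prop :=
  (∃ i i' : Fin n, grp? M = some i ∧ grp? M' = some i' ∧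
    (i < i' ∨ (i = i' ∧ ((rk M < rk M' ∧ ¬(rk M = 3 ∧ rk M' = 5)) ∨
      (rk M = 5 ∧ rk M' = 3))))) ∨
  (∃ j j' : Fin m, clause? M = some j ∧ clause? M' = some j' ∧ j < j') ∨
  (∃ j : Fin m, ∃ i : Fin n, clause? M = some j ∧ grp? M' = some i ∧
    tBeats (occ i j) (rk M')) ∨
  (∃ i : Fin n, ∃ j : Fin m, grp? M = some i ∧ clause? M' = some j ∧
    ¬ tBeats (occ i j) (rk M))

/-- The arc relation of the tournament `T_φ`: inside a module, arcs follow the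
transitive order of the indices; between distinct modules, arcs are given by `modArc`. -/
def arc {n m s₁ s₂ : ℕ} (occ : Fin n → Fin m → Option Bool) :
    Vtx n m s₁ s₂ → Vtx n m s₁ s₂ → Prop :=
  fun u v => (u.1 = v.1 ∧ (u.2 : ℕ) < (v.2 : ℕ)) ∨ (u.1 ≠ v.1 ∧ modArc occ u.1 v.1)

/-- The set of vertices of a module. -/
def mset {n m s₁ s₂ : ℕ} (M : ModName n m) : Set (Vtx n m s₁ s₂) := {v | v.1 = M}

/-- The set of vertices of group `i`: `A_i ∪ B_i ∪ C_i ∪ D_i ∪ E_i ∪ F_i`. -/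
def gset {n m s₁ s₂ : ℕ} (i : Fin n) : Set (Vtx n m s₁ s₂) := {v | grp? v.1 = some i}

/-- The sink of the transitive tournament induced by the module `F_n`. -/
def fnSink (n m s₁ s₂ : ℕ) (hn : 0 < n) (hs₁ : 0 < s₁) : Vtx n m s₁ s₂ :=
  ⟨.F ⟨n - 1, Nat.sub_lt hn one_pos⟩, ⟨s₁ - 1, Nat.sub_lt hs₁ one_pos⟩⟩

/-- The feedback arc set implied by an ordering `r`. -/
def fasSet {V : Type*} (A r : V → V → Prop) : Set (V × V) := {p | A p.1 p.2 ∧ r p.2 p.1}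

/-- `r` is an optimal ordering: a strict linear order whose implied feedback arc set
has minimum size. -/
def IsOptimalOrder {V : Type*} (A r : V → V → Prop) : Prop :=
  IsStrictTotalOrder V r ∧
    ∀ r' : V → V → Prop, IsStrictTotalOrder V r' → (fasSet A r).ncard ≤ (fasSet A r').ncard

/-- `r` places `v` last. -/
def PlacesLast {V : Type*} (r : V → V → Prop) (v : V) : Prop := ∀ u, u ≠ v → r u v

/-- `v` is a Slater winner: some optimal order places `v` last. -/
def SlaterWinner {V : Type*} (A : V → V → Prop) (v : V) : Prop :=
  ∃ r : V → V → Prop, IsOptimalOrder A r ∧ PlacesLast r v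

/-- The assignment `σ` satisfies clause `c_j`. -/
def SatClause {n m : ℕ} (occ : Fin n → Fin m → Option Bool) (σ : Fin n → Bool)
    (j : Fin m) : Prop :=
  ∃ i : Fin n, (occ i j = some true ∧ σ i = true) ∨ (occ i j = some false ∧ σ i = false)

/-- The assignment `σ` satisfies `φ`. -/
def Sat {n m : ℕ} (occ : Fin n → Fin m → Option Bool) (σ : Fin n → Bool) : Prop :=
  ∀ j : Fin m, SatClause occ σ j

/-- The weight of a truth assignment: the number of variables set to `true`. -/
def wt {n : ℕ} (σ : Fin n → Bool) : ℕ := (Finset.univ.filter (fun i => σ i = true)).card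

/-- Every element of `S` comes before every element of `S'` in the order `r`. -/
def Before {V : Type*} (r : V → V → Prop) (S S' : Set V) : Prop := ∀ u ∈ S, ∀ v ∈ S', r u v

/-- `S` is contiguous in the ordering `r`. -/
def Contig {V : Type*} (r : V → V → Prop) (S : Set V) : Prop :=
  ¬ ∃ x ∈ S, ∃ y ∈ S, ∃ z, z ∉ S ∧ r x z ∧ r z y

/-- A linear order on the vertices of `T_φ` is structured if every module is contiguous,
groups appear in increasing order, within each group `A_i ≺ B_i ≺ C_i` come before
`D_i ∪ E_i ∪ F_i`, and the last three modules appear in one of the cyclic orders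
`D_i ≺ E_i ≺ F_i`, `E_i ≺ F_i ≺ D_i`, `F_i ≺ D_i ≺ E_i`. -/
def Structured {n m s₁ s₂ : ℕ} (r : Vtx n m s₁ s₂ → Vtx n m s₁ s₂ → Prop) : Prop :=
  (∀ M : ModName n m, Contig r (mset M)) ∧
  (∀ i i' : Fin n, i < i' → Before r (gset i) (gset i')) ∧
  (∀ i : Fin n,
    Before r (mset (.A i)) (mset (.B i)) ∧
    Before r (mset (.B i)) (mset (.C i)) ∧
    Before r (mset (.A i) ∪ mset (.B i) ∪ mset (.C i))
      (mset (.D i) ∪ mset (.E i) ∪ mset (.F i))) ∧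
  (∀ i : Fin n,
    (Before r (mset (.D i)) (mset (.E i)) ∧ Before r (mset (.E i)) (mset (.F i))) ∨
    (Before r (mset (.E i)) (mset (.F i)) ∧ Before r (mset (.F i)) (mset (.D i))) ∨
    (Before r (mset (.F i)) (mset (.D i)) ∧ Before r (mset (.D i)) (mset (.E i))))

/-- `σ` is the assignment extracted from the structured order `r`: `x_i` is set to true
iff `D_i ≺ E_i ≺ F_i`. -/
def Extracted {n m s₁ s₂ : ℕ} (r : Vtx n m s₁ s₂ → Vtx n m s₁ s₂ → Prop)
    (σ : Fin n → Bool) : Prop :=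
  ∀ i : Fin n, σ i = true ↔
    (Before r (mset (.D i)) (mset (.E i)) ∧ Before r (mset (.E i)) (mset (.F i)))

instance tBeats.instDec : ∀ (o : Option Bool) (ρ : ℕ), Decidable (tBeats o ρ)
  | none, _ => inferInstanceAs (Decidable (_ ∨ _))
  | some true, _ => inferInstanceAs (Decidable (_ ∨ _))
  | some false, _ => inferInstanceAs (Decidable (_ ∨ _))

/-- position-to-rank function for the three cyclic orders of `D, E, F`. -/
def ordOf : Fin 3 → Fin 6 → Fin 6
  | ⟨0,_⟩, k => k
  | ⟨1,_⟩, k => if k = 3 then 4 else if k = 4 then 5 else if k = 5 then 3 else k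
  | _, k => if k = 3 then 5 else if k = 4 then 3 else if k = 5 then 4 else k

/-- rank `ρ` contributes a fully backward module, given direction data `o` and
before-flags `b`. -/
def goodb (o : Option Bool) (b : Fin 6 → Bool) (ρ : Fin 6) : Bool :=
  (decide (tBeats o ρ.val) && b ρ) || (!decide (tBeats o ρ.val) && !b ρ)

lemma core2 : ∀ (o : Option Bool) (c : Fin 3) (b : Fin 6 → Bool),
    (∀ k : Fin 5, b (ordOf c k.succ) = true → b (ordOf c k.castSucc) = true) →
    ∃ ρ1 ρ2 : Fin 6, ρ1 ≠ ρ2 ∧ goodb o b ρ1 = true ∧ goodb o b ρ2 = true := by decide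

lemma core3 : ∀ (o : Option Bool) (b : Fin 6 → Bool),
    ((∀ ρ, b ρ = true) ∨ (∀ ρ, b ρ = false)) →
    ∃ ρ1 ρ2 ρ3 : Fin 6, ρ1 ≠ ρ2 ∧ ρ1 ≠ ρ3 ∧ ρ2 ≠ ρ3 ∧
      goodb o b ρ1 = true ∧ goodb o b ρ2 = true ∧ goodb o b ρ3 = true := by decide

/-- the module of rank `ρ` in group `i`. -/
def modOf {n m : ℕ} (i : Fin n) : Fin 6 → ModName n m
  | ⟨0,_⟩ => .A i
  | ⟨1,_⟩ => .B i
  | ⟨2,_⟩ => .C i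
  | ⟨3,_⟩ => .D i
  | ⟨4,_⟩ => .E i
  | _ => .F i

lemma grp?_modOf {n m : ℕ} (i : Fin n) (ρ : Fin 6) : grp? (modOf (m := m) i ρ) = some i := by
  fin_cases ρ <;> rfl

lemma rk_modOf {n m : ℕ} (i : Fin n) (ρ : Fin 6) : rk (modOf (m := m) i ρ) = ρ.val := by
  fin_cases ρ <;> rfl

lemma modOf_ne_T {n m : ℕ} (i : Fin n) (ρ : Fin 6) (j : Fin m) : modOf i ρ ≠ .T j := by
  intro h
  have := grp?_modOf (m := m) i ρ
  rw [h] at this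
  simp [grp?] at this

lemma modOf_inj {n m : ℕ} {i i' : Fin n} {ρ ρ' : Fin 6}
    (h : modOf (m := m) i ρ = modOf i' ρ') : i = i' ∧ ρ = ρ' := by
  constructor
  · have h1 := grp?_modOf (m := m) i ρ
    rw [h, grp?_modOf] at h1
    exact (Option.some.inj h1).symm
  · have h2 := rk_modOf (m := m) i ρ
    rw [h, rk_modOf] at h2
    exact Fin.ext h2.symm

lemma msize_pos {n m s₁ s₂ : ℕ} (hs₁ : 0 < s₁) (hs₂ : 0 < s₂) (M : ModName n m) :
    0 < msize n m s₁ s₂ M := by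
  cases M <;> simp [msize] <;> first | omega | (split <;> omega)

lemma s₁_le_msize {n m s₁ s₂ : ℕ} (i : Fin n) (ρ : Fin 6) :
    s₁ ≤ msize n m s₁ s₂ (modOf i ρ) := by
  fin_cases ρ <;> (try rfl) <;> simp only [modOf, msize] <;> first | omega | (split <;> omega)
section Aux

variable {n m s₁ s₂ : ℕ}

/-- the `t`-th vertex of module `T j`. -/
def tvert (n m s₁ s₂ : ℕ) (j : Fin m) (t : Fin s₂) : Vtx n m s₁ s₂ := ⟨.T j, t⟩

variable (r : Vtx n m s₁ s₂ → Vtx n m s₁ s₂ → Prop) (j : Fin m)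

/-- module `M` lies entirely before vertex `t` of `T j`. -/
def Bel (t : Fin s₂) (M : ModName n m) : Prop :=
  ∀ v : Fin (msize n m s₁ s₂ M), r ⟨M, v⟩ (tvert n m s₁ s₂ j t)

/-- module `M` lies entirely after vertex `t` of `T j`. -/
def Aft (t : Fin s₂) (M : ModName n m) : Prop :=
  ∀ v : Fin (msize n m s₁ s₂ M), r (tvert n m s₁ s₂ j t) ⟨M, v⟩

variable (occ : Fin n → Fin m → Option Bool)

/-- module `M` is a variable module all of whose arcs to/from vertex `t` of `T j`
are backward. -/
def FullB (t : Fin s₂) (M : ModName n m) : Prop :=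
  ∃ i, grp? M = some i ∧
    ((tBeats (occ i j) (rk M) ∧ Bel r j t M) ∨ (¬ tBeats (occ i j) (rk M) ∧ Aft r j t M))

open Classical in
/-- the backward pair between vertex `t` of `T j` and vertex `v` of module `M`,
oriented according to the direction of the arcs. -/
noncomputable def pairAt (t : Fin s₂) (M : ModName n m) (v : Fin (msize n m s₁ s₂ M)) :
    Vtx n m s₁ s₂ × Vtx n m s₁ s₂ :=
  if (∃ i, grp? M = some i ∧ tBeats (occ i j) (rk M)) then
    (tvert n m s₁ s₂ j t, ⟨M, v⟩)
  else
    (⟨M, v⟩, tvert n m s₁ s₂ j t)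

/-- the index of the `T j` endpoint of a pair. -/
def keyIdx (p : Vtx n m s₁ s₂ × Vtx n m s₁ s₂) : ℕ :=
  if p.1.1 = ModName.T j then (p.1.2 : ℕ) else (p.2.2 : ℕ)

lemma before_sub {V : Type*} {rr : V → V → Prop} {S S' S₂ S₂' : Set V}
    (h : Before rr S S') (h1 : S₂ ⊆ S) (h2 : S₂' ⊆ S') : Before rr S₂ S₂' :=
  fun u hu v hv => h u (h1 hu) v (h2 hv)

lemma bel_or_aft (hr : IsStrictTotalOrder (Vtx n m s₁ s₂) r) (hcg : Contig r (mset M)) (hM : M ≠ ModName.T j) (t : Fin s₂) :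
    Bel r j t M ∨ Aft r j t M := by
  by_cases h : Bel r j t M
  · exact Or.inl h
  · right
    rw [Bel] at h
    push_neg at h
    obtain ⟨v, hv⟩ := h
    have hne : ∀ w : Fin (msize n m s₁ s₂ M), (⟨M, w⟩ : Vtx n m s₁ s₂) ≠ tvert n m s₁ s₂ j t := by
      intro w hw
      exact hM (congrArg Sigma.fst hw)
    have hv' : r (tvert n m s₁ s₂ j t) ⟨M, v⟩ := by
      rcases (@trichotomous_of _ r hr.toTrichotomous) ⟨M, v⟩ (tvert n m s₁ s₂ j t) with h1 | h1 | h1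
      · exact absurd h1 hv
      · exact absurd h1 (hne v)
      · exact h1
    intro w
    rcases (@trichotomous_of _ r hr.toTrichotomous) (tvert n m s₁ s₂ j t) ⟨M, w⟩ with h1 | h1 | h1
    · exact h1
    · exact absurd h1.symm (hne w)
    · exact absurd ⟨⟨M, w⟩, rfl, ⟨M, v⟩, rfl, tvert n m s₁ s₂ j t,
        (fun hmem => hM hmem.symm), h1, hv'⟩ hcg

lemma bel_mono (hr : IsStrictTotalOrder (Vtx n m s₁ s₂) r) {M M' : ModName n m} (hpos : 0 < msize n m s₁ s₂ M')
    (hb : Before r (mset M) (mset M')) {t : Fin s₂} (h : Bel r j t M') : Bel r j t M := by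
  intro v
  exact hr.toIsStrictOrder.toIsTrans.trans _ _ _ (hb ⟨M, v⟩ rfl ⟨M', ⟨0, hpos⟩⟩ rfl) (h ⟨0, hpos⟩)

lemma aft_mono (hr : IsStrictTotalOrder (Vtx n m s₁ s₂) r) {M M' : ModName n m} (hpos : 0 < msize n m s₁ s₂ M)
    (hb : Before r (mset M) (mset M')) {t : Fin s₂} (h : Aft r j t M) : Aft r j t M' := by
  intro v
  exact hr.toIsStrictOrder.toIsTrans.trans _ _ _ (h ⟨0, hpos⟩) (hb ⟨M, ⟨0, hpos⟩⟩ rfl ⟨M', v⟩ rfl)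

lemma not_bel_aft (hr : IsStrictTotalOrder (Vtx n m s₁ s₂) r) {M : ModName n m} (hpos : 0 < msize n m s₁ s₂ M) {t : Fin s₂}
    (h1 : Bel r j t M) (h2 : Aft r j t M) : False :=
  hr.toIsStrictOrder.toIrrefl.irrefl _ (hr.toIsStrictOrder.toIsTrans.trans _ _ _ (h1 ⟨0, hpos⟩) (h2 ⟨0, hpos⟩))

end Aux
section Aux2

variable {n m s₁ s₂ : ℕ} (occ : Fin n → Fin m → Option Bool)
  (r : Vtx n m s₁ s₂ → Vtx n m s₁ s₂ → Prop) (j : Fin m)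

/-- the set of backward arcs between `T j` and the variable modules. -/
def Xset : Set (Vtx n m s₁ s₂ × Vtx n m s₁ s₂) :=
  {p : Vtx n m s₁ s₂ × Vtx n m s₁ s₂ | p ∈ fasSet (arc occ) r ∧
    ((p.1.1 = .T j ∧ ∃ i : Fin n, grp? p.2.1 = some i) ∨
     (p.2.1 = .T j ∧ ∃ i : Fin n, grp? p.1.1 = some i))}

lemma pair_mem {t : Fin s₂} {M : ModName n m} {v : Fin (msize n m s₁ s₂ M)}
    (hfull : FullB r j occ t M) :
    pairAt j occ t M v ∈ Xset occ r j ∧ keyIdx j (pairAt j occ t M v) = (t : ℕ) := by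
  obtain ⟨i, hg, hc⟩ := hfull
  have hMT : M ≠ ModName.T j := by intro h; rw [h] at hg; simp [grp?] at hg
  by_cases htb : tBeats (occ i j) (rk M)
  · have hcond : ∃ i', grp? M = some i' ∧ tBeats (occ i' j) (rk M) := ⟨i, hg, htb⟩
    rw [pairAt, if_pos hcond]
    have hbel : Bel r j t M := by
      rcases hc with ⟨_, h⟩ | ⟨h, _⟩
      · exact h
      · exact absurd htb h
    refine ⟨⟨⟨Or.inr ⟨fun h => hMT h.symm, ?_⟩, hbel v⟩, Or.inl ⟨rfl, i, hg⟩⟩, ?_⟩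
    · exact Or.inr (Or.inr (Or.inl ⟨j, i, rfl, hg, htb⟩))
    · simp [keyIdx, tvert]
  · have hcond : ¬ ∃ i', grp? M = some i' ∧ tBeats (occ i' j) (rk M) := by
      rintro ⟨i', hg', htb'⟩
      rw [hg] at hg'
      exact htb ((Option.some.inj hg') ▸ htb')
    rw [pairAt, if_neg hcond]
    have haft : Aft r j t M := by
      rcases hc with ⟨h, _⟩ | ⟨_, h⟩
      · exact absurd h htb
      · exact h
    refine ⟨⟨⟨Or.inr ⟨hMT, ?_⟩, haft v⟩, Or.inr ⟨rfl, i, hg⟩⟩, ?_⟩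
    · exact Or.inr (Or.inr (Or.inr ⟨i, j, hg, rfl, htb⟩))
    · simp [keyIdx, tvert, hMT]

lemma pair_inj {t t' : Fin s₂} {M M' : ModName n m} {i i' : Fin n}
    {v : Fin (msize n m s₁ s₂ M)} {v' : Fin (msize n m s₁ s₂ M')}
    (hi : grp? M = some i) (hi' : grp? M' = some i')
    (h : pairAt j occ t M v = pairAt j occ t' M' v') :
    t = t' ∧ (⟨M, v⟩ : Vtx n m s₁ s₂) = ⟨M', v'⟩ := by
  have hMT : M ≠ ModName.T j := by intro hh; rw [hh] at hi; simp [grp?] at hi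
  have hMT' : M' ≠ ModName.T j := by intro hh; rw [hh] at hi'; simp [grp?] at hi'
  rw [pairAt, pairAt] at h
  split_ifs at h with h1 h2 h2
  · obtain ⟨ha, hb⟩ := Prod.mk.injEq .. ▸ h
    refine ⟨?_, hb⟩
    exact Fin.ext (congrArg (fun q : Vtx n m s₁ s₂ => (q.2 : ℕ)) ha)
  · obtain ⟨ha, _⟩ := Prod.mk.injEq .. ▸ h
    exact absurd (congrArg Sigma.fst ha).symm hMT'
  · obtain ⟨ha, _⟩ := Prod.mk.injEq .. ▸ h
    exact absurd (congrArg Sigma.fst ha) hMT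
  · obtain ⟨ha, hb⟩ := Prod.mk.injEq .. ▸ h
    refine ⟨?_, ha⟩
    exact Fin.ext (congrArg (fun q : Vtx n m s₁ s₂ => (q.2 : ℕ)) hb)

end Aux2
section Aux3

variable {n m s₁ s₂ : ℕ} (occ : Fin n → Fin m → Option Bool)
  (r : Vtx n m s₁ s₂ → Vtx n m s₁ s₂ → Prop) (j : Fin m)

open Finset Classical in
lemma grp_cnt (hr : IsStrictTotalOrder (Vtx n m s₁ s₂) r) (hstr : Structured r)
    (hs₁ : 0 < s₁) (hs₂ : 0 < s₂) (t : Fin s₂) (i : Fin n) :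
    2 ≤ (Finset.univ.filter fun ρ : Fin 6 => FullB r j occ t (modOf i ρ)).card ∧
    (((∀ ρ : Fin 6, Bel r j t (modOf i ρ)) ∨ (∀ ρ : Fin 6, Aft r j t (modOf i ρ))) →
      3 ≤ (Finset.univ.filter fun ρ : Fin 6 => FullB r j occ t (modOf i ρ)).card) := by
  classical
  obtain ⟨hcg, hgs, habc, hdef⟩ := hstr
  set b : Fin 6 → Bool := fun ρ => decide (Bel r j t (modOf i ρ)) with hbdef
  have hbiff : ∀ ρ, b ρ = true ↔ Bel r j t (modOf i ρ) := fun ρ => decide_eq_true_iff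
  have hdich : ∀ ρ : Fin 6, Bel r j t (modOf i ρ) ∨ Aft r j t (modOf i ρ) :=
    fun ρ => bel_or_aft r j hr (hcg _) (modOf_ne_T i ρ j) t
  have hgood : ∀ ρ, goodb (occ i j) b ρ = true → FullB r j occ t (modOf i ρ) := by
    intro ρ hgb
    rw [goodb, Bool.or_eq_true, Bool.and_eq_true, Bool.and_eq_true] at hgb
    refine ⟨i, grp?_modOf i ρ, ?_⟩
    rw [rk_modOf]
    rcases hgb with ⟨hd, hb⟩ | ⟨hd, hb⟩
    · exact Or.inl ⟨of_decide_eq_true hd, (hbiff ρ).mp hb⟩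
    · have hnb : ¬ Bel r j t (modOf i ρ) := by
        intro hB
        rw [← hbiff ρ] at hB
        simp [hB] at hb
      refine Or.inr ⟨?_, (hdich ρ).resolve_left hnb⟩
      intro hT
      rw [decide_eq_true hT] at hd
      simp at hd
  have hsub : ∀ {ρ}, goodb (occ i j) b ρ = true →
      ρ ∈ Finset.univ.filter fun ρ => FullB r j occ t (modOf i ρ) := fun h =>
    Finset.mem_filter.mpr ⟨Finset.mem_univ _, hgood _ h⟩
  have key : ∀ ρ ρ' : Fin 6, Before r (mset (modOf i ρ)) (mset (modOf i ρ')) →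
      b ρ' = true → b ρ = true := fun ρ ρ' hB hb' =>
    (hbiff _).mpr (bel_mono r j hr (msize_pos hs₁ hs₂ _) hB ((hbiff _).mp hb'))
  have hAB : Before r (mset (ModName.A i)) (mset (ModName.B i)) := (habc i).1
  have hBC : Before r (mset (ModName.B i)) (mset (ModName.C i)) := (habc i).2.1
  have hCX : ∀ X : ModName n m, mset (s₁ := s₁) (s₂ := s₂) X ⊆
      (mset (ModName.D i) ∪ mset (ModName.E i) ∪ mset (ModName.F i)) →
      Before r (mset (ModName.C i)) (mset X) := fun X hX =>
    before_sub (habc i).2.2 (fun v hv => Or.inr hv) hX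
  constructor
  · have hcons : ∃ c : Fin 3, ∀ k : Fin 5,
        b (ordOf c k.succ) = true → b (ordOf c k.castSucc) = true := by
      rcases hdef i with ⟨hDE, hEF⟩ | ⟨hEF, hFD⟩ | ⟨hFD, hDE⟩
      · refine ⟨0, ?_⟩
        intro k
        fin_cases k
        · exact key 0 1 hAB
        · exact key 1 2 hBC
        · exact key 2 3 (hCX _ (fun v hv => Or.inl (Or.inl hv)))
        · exact key 3 4 hDE
        · exact key 4 5 hEF
      · refine ⟨1, ?_⟩
        intro k
        fin_cases k
        · exact key 0 1 hAB
        · exact key 1 2 hBC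
        · exact key 2 4 (hCX _ (fun v hv => Or.inl (Or.inr hv)))
        · exact key 4 5 hEF
        · exact key 5 3 hFD
      · refine ⟨2, ?_⟩
        intro k
        fin_cases k
        · exact key 0 1 hAB
        · exact key 1 2 hBC
        · exact key 2 5 (hCX _ (fun v hv => Or.inr hv))
        · exact key 5 3 hFD
        · exact key 3 4 hDE
    obtain ⟨c, hc⟩ := hcons
    obtain ⟨ρ1, ρ2, hne, h1, h2⟩ := core2 (occ i j) c b hc
    calc 2 = ({ρ1, ρ2} : Finset (Fin 6)).card := (Finset.card_pair hne).symm
    _ ≤ _ := Finset.card_le_card (by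
        intro x hx
        simp only [Finset.mem_insert, Finset.mem_singleton] at hx
        rcases hx with rfl | rfl
        exacts [hsub h1, hsub h2])
  · intro hclean
    have hbc : (∀ ρ, b ρ = true) ∨ (∀ ρ, b ρ = false) := by
      rcases hclean with h | h
      · exact Or.inl fun ρ => (hbiff ρ).mpr (h ρ)
      · refine Or.inr fun ρ => ?_
        have hnb : ¬ Bel r j t (modOf i ρ) := fun hB =>
          not_bel_aft r j hr (msize_pos hs₁ hs₂ _) hB (h ρ)
        exact decide_eq_false hnb
    obtain ⟨ρ1, ρ2, ρ3, h12, h13, h23, h1, h2, h3⟩ := core3 (occ i j) b hbc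
    calc 3 = ({ρ1, ρ2, ρ3} : Finset (Fin 6)).card := by
          rw [Finset.card_insert_of_notMem (by simp [h12, h13]), Finset.card_pair h23]
    _ ≤ _ := Finset.card_le_card (by
        intro x hx
        simp only [Finset.mem_insert, Finset.mem_singleton] at hx
        rcases hx with rfl | rfl | rfl
        exacts [hsub h1, hsub h2, hsub h3])

end Aux3
section Aux4

variable {n m s₁ s₂ : ℕ} (occ : Fin n → Fin m → Option Bool)
  (r : Vtx n m s₁ s₂ → Vtx n m s₁ s₂ → Prop) (j : Fin m)

lemma clean_exists (hr : IsStrictTotalOrder (Vtx n m s₁ s₂) r) (hstr : Structured r)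
    (hn : 0 < n) (t : Fin s₂) :
    ∃ i₀ : Fin n, ∀ i, i ≠ i₀ →
      ((∀ ρ : Fin 6, Bel r j t (modOf i ρ)) ∨ (∀ ρ : Fin 6, Aft r j t (modOf i ρ))) := by
  classical
  obtain ⟨hcg, hgs, habc, hdef⟩ := hstr
  by_cases hall : ∀ i : Fin n,
      ((∀ ρ : Fin 6, Bel r j t (modOf i ρ)) ∨ (∀ ρ : Fin 6, Aft r j t (modOf i ρ)))
  · exact ⟨⟨0, hn⟩, fun i _ => hall i⟩
  push_neg at hall
  obtain ⟨i₀, hi₀⟩ := hall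
  have getAfter : ∀ x : Fin n, ((∃ ρ : Fin 6, ¬ Bel r j t (modOf x ρ)) ∧
      (∃ ρ : Fin 6, ¬ Aft r j t (modOf x ρ))) →
      ∃ u : Vtx n m s₁ s₂, grp? u.1 = some x ∧ r (tvert n m s₁ s₂ j t) u := by
    intro x hx
    obtain ⟨ρ, hρ⟩ := hx.1
    rw [Bel] at hρ
    push_neg at hρ
    obtain ⟨v, hv⟩ := hρ
    refine ⟨⟨modOf x ρ, v⟩, grp?_modOf x ρ, ?_⟩
    rcases (@trichotomous_of _ r hr.toTrichotomous) (⟨modOf x ρ, v⟩ : Vtx n m s₁ s₂)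
        (tvert n m s₁ s₂ j t) with h | h | h
    · exact absurd h hv
    · exact absurd (congrArg Sigma.fst h) (modOf_ne_T x ρ j)
    · exact h
  have getBefore : ∀ x : Fin n, ((∃ ρ : Fin 6, ¬ Bel r j t (modOf x ρ)) ∧
      (∃ ρ : Fin 6, ¬ Aft r j t (modOf x ρ))) →
      ∃ w : Vtx n m s₁ s₂, grp? w.1 = some x ∧ r w (tvert n m s₁ s₂ j t) := by
    intro x hx
    obtain ⟨ρ, hρ⟩ := hx.2
    rw [Aft] at hρ
    push_neg at hρ
    obtain ⟨v, hv⟩ := hρ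
    refine ⟨⟨modOf x ρ, v⟩, grp?_modOf x ρ, ?_⟩
    rcases (@trichotomous_of _ r hr.toTrichotomous) (⟨modOf x ρ, v⟩ : Vtx n m s₁ s₂)
        (tvert n m s₁ s₂ j t) with h | h | h
    · exact h
    · exact absurd (congrArg Sigma.fst h) (modOf_ne_T x ρ j)
    · exact absurd h hv
  refine ⟨i₀, fun i hne => ?_⟩
  by_contra hi
  push_neg at hi
  rcases lt_trichotomy i i₀ with hlt | heq | hlt
  · obtain ⟨u, hu1, hu2⟩ := getAfter i hi
    obtain ⟨w, hw1, hw2⟩ := getBefore i₀ hi₀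
    exact hr.toIsStrictOrder.toIrrefl.irrefl _
      (hr.toIsStrictOrder.toIsTrans.trans _ _ _
        (hr.toIsStrictOrder.toIsTrans.trans _ _ _ hu2 (hgs i i₀ hlt u hu1 w hw1)) hw2)
  · exact hne heq
  · obtain ⟨u, hu1, hu2⟩ := getAfter i₀ hi₀
    obtain ⟨w, hw1, hw2⟩ := getBefore i hi
    exact hr.toIsStrictOrder.toIrrefl.irrefl _
      (hr.toIsStrictOrder.toIsTrans.trans _ _ _
        (hr.toIsStrictOrder.toIsTrans.trans _ _ _ hu2 (hgs i₀ i hlt u hu1 w hw1)) hw2)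

open Finset Classical in
lemma cnt_ge (hr : IsStrictTotalOrder (Vtx n m s₁ s₂) r) (hstr : Structured r)
    (hn : 0 < n) (hs₁ : 0 < s₁) (hs₂ : 0 < s₂) (t : Fin s₂) :
    3 * n - 1 ≤
      (Finset.univ.filter fun x : Fin n × Fin 6 => FullB r j occ t (modOf x.1 x.2)).card := by
  classical
  rw [Finset.card_eq_sum_card_fiberwise
    (f := Prod.fst) (t := (Finset.univ : Finset (Fin n))) (fun x _ => Finset.mem_univ _)]
  have hfe : ∀ i : Fin n,
      ((Finset.univ.filter fun x : Fin n × Fin 6 => FullB r j occ t (modOf x.1 x.2)).filter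
        fun x => x.1 = i).card
      = (Finset.univ.filter fun ρ : Fin 6 => FullB r j occ t (modOf i ρ)).card := by
    intro i
    refine Finset.card_bij' (fun x _ => x.2) (fun ρ _ => (i, ρ)) ?_ ?_ ?_ ?_
    · intro a ha
      simp only [Finset.mem_filter, Finset.mem_univ, true_and] at ha ⊢
      rw [← ha.2]
      exact ha.1
    · intro ρ hρ
      simp only [Finset.mem_filter, Finset.mem_univ, true_and] at hρ ⊢
      exact ⟨hρ, trivial⟩
    · intro a ha
      have h2 : a.1 = i := (Finset.mem_filter.mp ha).2
      show (i, a.2) = a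
      rw [← h2]
    · intro ρ hρ
      rfl
  obtain ⟨i₀, hi₀⟩ := clean_exists r j hr hstr hn t
  have h2 : 2 ≤ ((Finset.univ.filter fun x : Fin n × Fin 6 =>
      FullB r j occ t (modOf x.1 x.2)).filter fun x => x.1 = i₀).card := by
    rw [hfe i₀]
    exact (grp_cnt occ r j hr hstr hs₁ hs₂ t i₀).1
  have h3 : ∀ i ∈ Finset.univ.erase i₀, 3 ≤ ((Finset.univ.filter fun x : Fin n × Fin 6 =>
      FullB r j occ t (modOf x.1 x.2)).filter fun x => x.1 = i).card := by
    intro i hi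
    rw [hfe i]
    exact (grp_cnt occ r j hr hstr hs₁ hs₂ t i).2
      (hi₀ i (Finset.mem_erase.mp hi).1)
  rw [← Finset.add_sum_erase _ _ (Finset.mem_univ i₀)]
  have hsum : 3 * (n - 1) ≤ ∑ i ∈ Finset.univ.erase i₀, ((Finset.univ.filter
      fun x : Fin n × Fin 6 => FullB r j occ t (modOf x.1 x.2)).filter
      fun x => x.1 = i).card := by
    calc 3 * (n - 1) = ∑ _i ∈ Finset.univ.erase i₀, 3 := by
          rw [Finset.sum_const, Finset.card_erase_of_mem (Finset.mem_univ i₀), Finset.card_univ,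
            Fintype.card_fin, smul_eq_mul, mul_comm]
    _ ≤ _ := Finset.sum_le_sum h3
  omega

end Aux4
/-- In a structured order, for every clause module `T_j`, the number of feedback arcs
with one endpoint in `T_j` and the other endpoint in a variable module is at least
`(3n−1)·s₁·s₂`. -/
theorem stmt14 (n m s₁ s₂ : ℕ) (hn : 0 < n) (hm : 0 < m) (hs₁ : 0 < s₁) (hs₂ : 0 < s₂)
    (occ : Fin n → Fin m → Option Bool)
    (h3lit : ∀ j : Fin m, ({i : Fin n | occ i j ≠ none}).ncard ≤ 3)
    (hallF : ∀ j : Fin m, ∃ i : Fin n, occ i j = some false)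
    (r : Vtx n m s₁ s₂ → Vtx n m s₁ s₂ → Prop) (hr : IsStrictTotalOrder (Vtx n m s₁ s₂) r)
    (hstr : Structured r) :
    ∀ j : Fin m, (3 * n - 1) * s₁ * s₂ ≤
      {p : Vtx n m s₁ s₂ × Vtx n m s₁ s₂ | p ∈ fasSet (arc occ) r ∧
        ((p.1.1 = .T j ∧ ∃ i : Fin n, grp? p.2.1 = some i) ∨
         (p.2.1 = .T j ∧ ∃ i : Fin n, grp? p.1.1 = some i))}.ncard := by
  intro j
  classical
  show (3 * n - 1) * s₁ * s₂ ≤ (Xset occ r j).ncard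
  have hXfin : (Xset occ r j).Finite := Set.toFinite _
  rw [Set.ncard_eq_toFinset_card (Xset occ r j) hXfin]
  have hmaps : ∀ p ∈ hXfin.toFinset, keyIdx j p ∈ Finset.range s₂ := by
    intro p hp
    rw [Set.Finite.mem_toFinset] at hp
    obtain ⟨hfas, hcase⟩ := hp
    rcases hcase with ⟨h1, i, hg⟩ | ⟨h1, i, hg⟩
    · rw [keyIdx, if_pos h1]
      have hms : msize n m s₁ s₂ p.1.1 = s₂ := by rw [h1]; rfl
      have h2 : (p.1.2 : ℕ) < msize n m s₁ s₂ p.1.1 := p.1.2.isLt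
      exact Finset.mem_range.mpr (by omega)
    · have hne : p.1.1 ≠ ModName.T j := by
        intro hh
        rw [hh] at hg
        simp [grp?] at hg
      rw [keyIdx, if_neg hne]
      have hms : msize n m s₁ s₂ p.2.1 = s₂ := by rw [h1]; rfl
      have h2 : (p.2.2 : ℕ) < msize n m s₁ s₂ p.2.1 := p.2.2.isLt
      exact Finset.mem_range.mpr (by omega)
  rw [Finset.card_eq_sum_card_fiberwise hmaps]
  have hfiber : ∀ b ∈ Finset.range s₂,
      (3 * n - 1) * s₁ ≤ (hXfin.toFinset.filter fun p => keyIdx j p = b).card := by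
    intro bb hbb
    set t : Fin s₂ := ⟨bb, Finset.mem_range.mp hbb⟩ with ht
    have hcnt := cnt_ge occ r j hr hstr hn hs₁ hs₂ t
    have hcard : (((Finset.univ.filter fun x : Fin n × Fin 6 =>
        FullB r j occ t (modOf x.1 x.2)) ×ˢ (Finset.univ : Finset (Fin s₁))).card)
        = (Finset.univ.filter fun x : Fin n × Fin 6 =>
          FullB r j occ t (modOf x.1 x.2)).card * s₁ := by
      rw [Finset.card_product, Finset.card_univ, Fintype.card_fin]
    have hle : (3 * n - 1) * s₁ ≤ (((Finset.univ.filter fun x : Fin n × Fin 6 =>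
        FullB r j occ t (modOf x.1 x.2)) ×ˢ (Finset.univ : Finset (Fin s₁))).card) := by
      rw [hcard]
      exact Nat.mul_le_mul_right s₁ hcnt
    refine le_trans hle (Finset.card_le_card_of_injOn
      (fun x : (Fin n × Fin 6) × Fin s₁ => pairAt j occ t (modOf x.1.1 x.1.2)
        ⟨(x.2 : ℕ) % msize n m s₁ s₂ (modOf x.1.1 x.1.2),
          Nat.mod_lt _ (msize_pos hs₁ hs₂ _)⟩) ?_ ?_)
    · intro x hx
      obtain ⟨hx1, -⟩ := Finset.mem_product.mp hx
      have hfull : FullB r j occ t (modOf x.1.1 x.1.2) := (Finset.mem_filter.mp hx1).2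
      obtain ⟨hmem, hkey⟩ := pair_mem occ r j (v := ⟨(x.2 : ℕ) % msize n m s₁ s₂
        (modOf x.1.1 x.1.2), Nat.mod_lt _ (msize_pos hs₁ hs₂ _)⟩) hfull
      exact Finset.mem_filter.mpr ⟨Set.Finite.mem_toFinset _ |>.mpr hmem, hkey⟩
    · rintro ⟨⟨a, ρ⟩, k⟩ hx ⟨⟨a', ρ'⟩, k'⟩ hx' h
      obtain ⟨-, hsig⟩ := pair_inj occ j (grp?_modOf a ρ) (grp?_modOf a' ρ') h
      obtain ⟨h1, h2⟩ := modOf_inj (congrArg Sigma.fst hsig)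
      subst h1
      subst h2
      have h3 : (k : ℕ) % msize n m s₁ s₂ (modOf a ρ) =
          (k' : ℕ) % msize n m s₁ s₂ (modOf a ρ) :=
        congrArg (fun q : Vtx n m s₁ s₂ => (q.2 : ℕ)) hsig
      rw [Nat.mod_eq_of_lt (lt_of_lt_of_le k.isLt (s₁_le_msize a ρ)),
        Nat.mod_eq_of_lt (lt_of_lt_of_le k'.isLt (s₁_le_msize a ρ))] at h3
      simp [Fin.ext h3]
  calc (3 * n - 1) * s₁ * s₂ = ∑ _b ∈ Finset.range s₂, (3 * n - 1) * s₁ := by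
        rw [Finset.sum_const, Finset.card_range, smul_eq_mul, mul_comm]
  _ ≤ _ := Finset.sum_le_sum hfiber
end

section
/- Let σ be a satisfying assignment of φ that sets exactly k variables to True, with σ(x_n) = True. Then there exists a linear order on the vertices of T_φ that places the sink of the transitive tournament induced by F_n last and whose implied feedback arc set has size at most n·s₁² + 2(n−k)·s₁ + (3n−1)m·s₁·s₂ + m²·s₂² + 9m(n−1)·s₂. -/
set_option linter.unreachableTactic false
set_option linter.unusedTactic false
set_option linter.unusedVariables false
set_option linter.unnecessarySeqFocus false

section Stmt15Aux

open Finset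

variable {n m : ℕ}

/-- group index of a module, with clause modules assigned via `ι`. -/
def gI (ι : Fin m → Fin n) : ModName n m → ℕ
  | .A i => i
  | .B i => i
  | .C i => i
  | .D i => i
  | .E i => i
  | .F i => i
  | .T j => ι j

/-- local position of a module inside its group window. -/
def locM (σ : Fin n → Bool) : ModName n m → ℕ
  | .A _ => 0
  | .B _ => 8
  | .C _ => 16
  | .D i => if σ i then 24 else 7 * m + 38
  | .E i => if σ i then 32 else 25
  | .F i => if σ i then 7 * m + 40 else 33
  | .T j => 7 * (j : ℕ) + 41

def ordM (σ : Fin n → Bool) (ι : Fin m → Fin n) (M : ModName n m) : ℕ :=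
  (7 * m + 43) * gI ι M + locM σ M

lemma locM_lt (σ : Fin n → Bool) (M : ModName n m) : locM σ M < 7 * m + 43 := by
  rcases M with i | i | i | i | i | i | j <;>
    simp only [locM] <;>
    first
      | omega
      | (split_ifs <;> omega)

lemma decompW {W a b x y : ℕ} (hx : x < W) (hy : y < W) (h : W * a + x = W * b + y) :
    a = b ∧ x = y := by
  have hW : 0 < W := by omega
  have ha : (W * a + x) / W = a := by
    rw [Nat.mul_add_div hW, Nat.div_eq_of_lt hx, Nat.add_zero]
  have hb : (W * b + y) / W = b := by
    rw [Nat.mul_add_div hW, Nat.div_eq_of_lt hy, Nat.add_zero]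
  have hab : a = b := by rw [← ha, ← hb, h]
  subst hab
  refine ⟨rfl, by omega⟩

lemma ordM_inj (σ : Fin n → Bool) (ι : Fin m → Fin n) {M N : ModName n m}
    (h : ordM σ ι M = ordM σ ι N) : M = N := by
  obtain ⟨hg, hl⟩ := decompW (locM_lt σ M) (locM_lt σ N) h
  rcases M with i | i | i | i | i | i | j <;> rcases N with i' | i' | i' | i' | i' | i' | j' <;>
    simp only [gI, locM] at hg hl <;>
    first
      | (exact congrArg _ (Fin.ext hg))
      | (exact congrArg _ (Fin.ext (by omega)))
      | (exfalso; split_ifs at hl <;> omega)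
      | (exfalso; omega)

lemma ordM_lt_of_g {σ : Fin n → Bool} {ι : Fin m → Fin n} {M N : ModName n m}
    (h : gI ι M < gI ι N) : ordM σ ι M < ordM σ ι N := by
  have h1 : (7 * m + 43) * (gI ι M + 1) ≤ (7 * m + 43) * gI ι N := Nat.mul_le_mul_left _ h
  have h2 := locM_lt σ M
  rw [Nat.mul_add, Nat.mul_one] at h1
  simp only [ordM]; omega

lemma ordM_le_of_loc {σ : Fin n → Bool} {ι : Fin m → Fin n} {M N : ModName n m}
    (h : gI ι M = gI ι N) (h2 : locM σ M ≤ locM σ N) : ordM σ ι M ≤ ordM σ ι N := by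
  simp only [ordM, h]; omega

lemma ordM_lt_of_loc {σ : Fin n → Bool} {ι : Fin m → Fin n} {M N : ModName n m}
    (h : gI ι M = gI ι N) (h2 : locM σ M < locM σ N) : ordM σ ι M < ordM σ ι N := by
  simp only [ordM, h]; omega

variable {s₁ s₂ : ℕ}

lemma msize_le (M : ModName n m) : msize n m s₁ s₂ M ≤ s₁ + s₂ + 3 := by
  rcases M with i | i | i | i | i | i | j <;> simp only [msize] <;>
    first
      | omega
      | (split_ifs <;> omega)

def keyV (σ : Fin n → Bool) (ι : Fin m → Fin n) (u : Vtx n m s₁ s₂) : ℕ :=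
  (s₁ + s₂ + 3) * ordM σ ι u.1 + (u.2 : ℕ)

lemma keyV_lt_of_ord {σ : Fin n → Bool} {ι : Fin m → Fin n} {u v : Vtx n m s₁ s₂}
    (h : ordM σ ι u.1 < ordM σ ι v.1) : keyV σ ι u < keyV σ ι v := by
  have h1 : (s₁ + s₂ + 3) * (ordM σ ι u.1 + 1) ≤ (s₁ + s₂ + 3) * ordM σ ι v.1 :=
    Nat.mul_le_mul_left _ h
  have h2 : (u.2 : ℕ) < msize n m s₁ s₂ u.1 := u.2.isLt
  have h3 := msize_le (s₁ := s₁) (s₂ := s₂) u.1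
  rw [Nat.mul_add, Nat.mul_one] at h1
  simp only [keyV]
  omega

lemma keyV_inj {σ : Fin n → Bool} {ι : Fin m → Fin n} {u v : Vtx n m s₁ s₂}
    (h : keyV σ ι u = keyV σ ι v) : u = v := by
  have h2 : (u.2 : ℕ) < s₁ + s₂ + 3 := lt_of_lt_of_le u.2.isLt (msize_le u.1)
  have h3 : (v.2 : ℕ) < s₁ + s₂ + 3 := lt_of_lt_of_le v.2.isLt (msize_le v.1)
  obtain ⟨h4, h5⟩ := decompW h2 h3 h
  have h6 : u.1 = v.1 := ordM_inj _ _ h4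
  obtain ⟨M, x⟩ := u
  obtain ⟨N, y⟩ := v
  cases h6
  exact congrArg _ (Fin.ext h5)

lemma clause?_none {M : ModName n m} {i : Fin n} (h : grp? M = some i) : clause? M = none := by
  cases M <;> simp_all [grp?, clause?]

lemma modArc_vv (occ : Fin n → Fin m → Option Bool) {M N : ModName n m} {i i' : Fin n}
    (hM : grp? M = some i) (hN : grp? N = some i') :
    modArc occ M N ↔ i < i' ∨ (i = i' ∧ ((rk M < rk N ∧ ¬(rk M = 3 ∧ rk N = 5)) ∨
      (rk M = 5 ∧ rk N = 3))) := by
  have h1 := clause?_none hM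
  have h2 := clause?_none hN
  simp [modArc, hM, hN, h1, h2]

lemma modArc_tv (occ : Fin n → Fin m → Option Bool) {j : Fin m} {M : ModName n m} {i : Fin n}
    (hM : grp? M = some i) :
    modArc occ (.T j) M ↔ tBeats (occ i j) (rk M) := by
  have h1 := clause?_none hM
  have h2 : grp? (ModName.T j : ModName n m) = none := rfl
  have h3 : clause? (ModName.T j : ModName n m) = some j := rfl
  simp [modArc, hM, h1, h2, h3]

lemma modArc_vt (occ : Fin n → Fin m → Option Bool) {j : Fin m} {M : ModName n m} {i : Fin n}
    (hM : grp? M = some i) :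
    modArc occ M (.T j) ↔ ¬ tBeats (occ i j) (rk M) := by
  have h1 := clause?_none hM
  have h2 : grp? (ModName.T j : ModName n m) = none := rfl
  have h3 : clause? (ModName.T j : ModName n m) = some j := rfl
  simp [modArc, hM, h1, h2, h3]

noncomputable def wgt (occ : Fin n → Fin m → Option Bool) (σ : Fin n → Bool) (ι : Fin m → Fin n)
    (s₁ s₂ : ℕ) (M N : ModName n m) : ℕ :=
  @ite _ (M ≠ N ∧ modArc occ M N ∧ ordM σ ι N < ordM σ ι M) (Classical.propDecidable _)
    (msize n m s₁ s₂ M * msize n m s₁ s₂ N) 0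

lemma wgt_le {occ : Fin n → Fin m → Option Bool} {σ : Fin n → Bool} {ι : Fin m → Fin n}
    {M N : ModName n m} : wgt occ σ ι s₁ s₂ M N ≤ msize n m s₁ s₂ M * msize n m s₁ s₂ N := by
  unfold wgt; split
  · exact le_rfl
  · exact Nat.zero_le _

lemma wgt_zero_of_ord {occ : Fin n → Fin m → Option Bool} {σ : Fin n → Bool} {ι : Fin m → Fin n}
    {M N : ModName n m} (h : ordM σ ι M ≤ ordM σ ι N) : wgt occ σ ι s₁ s₂ M N = 0 := by
  unfold wgt
  rw [if_neg]
  rintro ⟨-, -, h2⟩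
  omega

lemma wgt_zero_of_not_arc {occ : Fin n → Fin m → Option Bool} {σ : Fin n → Bool}
    {ι : Fin m → Fin n} {M N : ModName n m} (h : ¬ modArc occ M N) :
    wgt occ σ ι s₁ s₂ M N = 0 := by
  unfold wgt
  rw [if_neg]
  rintro ⟨-, h2, -⟩
  exact h h2

lemma wgt_eq_of_cond {occ : Fin n → Fin m → Option Bool} {σ : Fin n → Bool} {ι : Fin m → Fin n}
    {M N : ModName n m} (h : M ≠ N ∧ modArc occ M N ∧ ordM σ ι N < ordM σ ι M) :
    wgt occ σ ι s₁ s₂ M N = msize n m s₁ s₂ M * msize n m s₁ s₂ N := by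
  unfold wgt
  rw [if_pos h]

def Vm (i : Fin n) : Fin 6 → ModName n m := ![.A i, .B i, .C i, .D i, .E i, .F i]

lemma Vm0 (i : Fin n) : Vm (m := m) i 0 = .A i := rfl
lemma Vm1 (i : Fin n) : Vm (m := m) i 1 = .B i := rfl
lemma Vm2 (i : Fin n) : Vm (m := m) i 2 = .C i := rfl
lemma Vm3 (i : Fin n) : Vm (m := m) i 3 = .D i := rfl
lemma Vm4 (i : Fin n) : Vm (m := m) i 4 = .E i := rfl
lemma Vm5 (i : Fin n) : Vm (m := m) i 5 = .F i := rfl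

def modEquiv : ModName n m ≃ (Fin n × Fin 6) ⊕ Fin m where
  toFun M := match M with
    | .A i => .inl (i, 0)
    | .B i => .inl (i, 1)
    | .C i => .inl (i, 2)
    | .D i => .inl (i, 3)
    | .E i => .inl (i, 4)
    | .F i => .inl (i, 5)
    | .T j => .inr j
  invFun x := match x with
    | .inl (i, r) => Vm i r
    | .inr j => .T j
  left_inv M := by cases M <;> rfl
  right_inv x := by
    rcases x with ⟨i, r⟩ | j
    · fin_cases r <;> rfl
    · rfl

lemma sum_modName (f : ModName n m → ℕ) :
    ∑ M : ModName n m, f M = (∑ i : Fin n, ∑ r : Fin 6, f (Vm i r)) + ∑ j : Fin m, f (.T j) := by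
  rw [← Equiv.sum_comp (modEquiv (n := n) (m := m)).symm f, Fintype.sum_sum_type,
    Fintype.sum_prod_type]
  rfl

def moduleEquiv (M : ModName n m) :
    {u : Vtx n m s₁ s₂ // u.1 = M} ≃ Fin (msize n m s₁ s₂ M) where
  toFun u := Fin.cast (congrArg _ u.2) u.1.2
  invFun b := ⟨⟨M, b⟩, rfl⟩
  left_inv := by
    rintro ⟨⟨N, x⟩, h⟩
    subst h
    rfl
  right_inv b := rfl

lemma card_module (M : ModName n m) :
    (Finset.univ.filter fun u : Vtx n m s₁ s₂ => u.1 = M).card = msize n m s₁ s₂ M := by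
  classical
  calc (Finset.univ.filter fun u : Vtx n m s₁ s₂ => u.1 = M).card
      = Fintype.card {u : Vtx n m s₁ s₂ // u.1 = M} := (Fintype.card_subtype _).symm
    _ = msize n m s₁ s₂ M := by rw [Fintype.card_congr (moduleEquiv M), Fintype.card_fin]

lemma msize_E_le (i : Fin n) : msize n m s₁ s₂ (.E i) ≤ s₁ + 3 := by
  simp only [msize]
  split_ifs <;> omega

lemma grp?_of_gI {i : Fin n} {M : ModName n m} (h : grp? M = some i) : gI ι M = (i : ℕ) := by
  cases M <;> simp_all [grp?, gI]


lemma vv_diag (occ : Fin n → Fin m → Option Bool) (σ : Fin n → Bool) (ι : Fin m → Fin n)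
    (i : Fin n) (hi : σ i = false → (i : ℕ) ≠ n - 1) :
    ∑ r : Fin 6, ∑ r' : Fin 6, wgt occ σ ι s₁ s₂ (Vm i r) (Vm i r') ≤
      s₁ * s₁ + (if σ i then 0 else 2 * s₁) := by
  simp only [Fin.sum_univ_six, Vm0, Vm1, Vm2, Vm3, Vm4, Vm5]
  rcases hσi : σ i with _ | _
  · rw [if_neg (by simp)]
    have hzAA : wgt occ σ ι s₁ s₂ (ModName.A i) (ModName.A i) = 0 := by
      exact wgt_zero_of_ord (ordM_le_of_loc rfl (by simp [locM, hσi] <;> omega))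
    have hzAB : wgt occ σ ι s₁ s₂ (ModName.A i) (ModName.B i) = 0 := by
      exact wgt_zero_of_ord (ordM_le_of_loc rfl (by simp [locM, hσi] <;> omega))
    have hzAC : wgt occ σ ι s₁ s₂ (ModName.A i) (ModName.C i) = 0 := by
      exact wgt_zero_of_ord (ordM_le_of_loc rfl (by simp [locM, hσi] <;> omega))
    have hzAD : wgt occ σ ι s₁ s₂ (ModName.A i) (ModName.D i) = 0 := by
      exact wgt_zero_of_ord (ordM_le_of_loc rfl (by simp [locM, hσi] <;> omega))
    have hzAE : wgt occ σ ι s₁ s₂ (ModName.A i) (ModName.E i) = 0 := by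
      exact wgt_zero_of_ord (ordM_le_of_loc rfl (by simp [locM, hσi] <;> omega))
    have hzAF : wgt occ σ ι s₁ s₂ (ModName.A i) (ModName.F i) = 0 := by
      exact wgt_zero_of_ord (ordM_le_of_loc rfl (by simp [locM, hσi] <;> omega))
    have hzBA : wgt occ σ ι s₁ s₂ (ModName.B i) (ModName.A i) = 0 := by
      exact wgt_zero_of_not_arc (by rw [modArc_vv occ (M := ModName.B i) (N := ModName.A i) rfl rfl]; simp [rk])
    have hzBB : wgt occ σ ι s₁ s₂ (ModName.B i) (ModName.B i) = 0 := by
      exact wgt_zero_of_ord (ordM_le_of_loc rfl (by simp [locM, hσi] <;> omega))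
    have hzBC : wgt occ σ ι s₁ s₂ (ModName.B i) (ModName.C i) = 0 := by
      exact wgt_zero_of_ord (ordM_le_of_loc rfl (by simp [locM, hσi] <;> omega))
    have hzBD : wgt occ σ ι s₁ s₂ (ModName.B i) (ModName.D i) = 0 := by
      exact wgt_zero_of_ord (ordM_le_of_loc rfl (by simp [locM, hσi] <;> omega))
    have hzBE : wgt occ σ ι s₁ s₂ (ModName.B i) (ModName.E i) = 0 := by
      exact wgt_zero_of_ord (ordM_le_of_loc rfl (by simp [locM, hσi] <;> omega))
    have hzBF : wgt occ σ ι s₁ s₂ (ModName.B i) (ModName.F i) = 0 := by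
      exact wgt_zero_of_ord (ordM_le_of_loc rfl (by simp [locM, hσi] <;> omega))
    have hzCA : wgt occ σ ι s₁ s₂ (ModName.C i) (ModName.A i) = 0 := by
      exact wgt_zero_of_not_arc (by rw [modArc_vv occ (M := ModName.C i) (N := ModName.A i) rfl rfl]; simp [rk])
    have hzCB : wgt occ σ ι s₁ s₂ (ModName.C i) (ModName.B i) = 0 := by
      exact wgt_zero_of_not_arc (by rw [modArc_vv occ (M := ModName.C i) (N := ModName.B i) rfl rfl]; simp [rk])
    have hzCC : wgt occ σ ι s₁ s₂ (ModName.C i) (ModName.C i) = 0 := by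
      exact wgt_zero_of_ord (ordM_le_of_loc rfl (by simp [locM, hσi] <;> omega))
    have hzCD : wgt occ σ ι s₁ s₂ (ModName.C i) (ModName.D i) = 0 := by
      exact wgt_zero_of_ord (ordM_le_of_loc rfl (by simp [locM, hσi] <;> omega))
    have hzCE : wgt occ σ ι s₁ s₂ (ModName.C i) (ModName.E i) = 0 := by
      exact wgt_zero_of_ord (ordM_le_of_loc rfl (by simp [locM, hσi] <;> omega))
    have hzCF : wgt occ σ ι s₁ s₂ (ModName.C i) (ModName.F i) = 0 := by
      exact wgt_zero_of_ord (ordM_le_of_loc rfl (by simp [locM, hσi] <;> omega))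
    have hzDA : wgt occ σ ι s₁ s₂ (ModName.D i) (ModName.A i) = 0 := by
      exact wgt_zero_of_not_arc (by rw [modArc_vv occ (M := ModName.D i) (N := ModName.A i) rfl rfl]; simp [rk])
    have hzDB : wgt occ σ ι s₁ s₂ (ModName.D i) (ModName.B i) = 0 := by
      exact wgt_zero_of_not_arc (by rw [modArc_vv occ (M := ModName.D i) (N := ModName.B i) rfl rfl]; simp [rk])
    have hzDC : wgt occ σ ι s₁ s₂ (ModName.D i) (ModName.C i) = 0 := by
      exact wgt_zero_of_not_arc (by rw [modArc_vv occ (M := ModName.D i) (N := ModName.C i) rfl rfl]; simp [rk])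
    have hzDD : wgt occ σ ι s₁ s₂ (ModName.D i) (ModName.D i) = 0 := by
      exact wgt_zero_of_ord (ordM_le_of_loc rfl (by simp [locM, hσi] <;> omega))
    have hzDF : wgt occ σ ι s₁ s₂ (ModName.D i) (ModName.F i) = 0 := by
      exact wgt_zero_of_not_arc (by rw [modArc_vv occ (M := ModName.D i) (N := ModName.F i) rfl rfl]; simp [rk])
    have hzEA : wgt occ σ ι s₁ s₂ (ModName.E i) (ModName.A i) = 0 := by
      exact wgt_zero_of_not_arc (by rw [modArc_vv occ (M := ModName.E i) (N := ModName.A i) rfl rfl]; simp [rk])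
    have hzEB : wgt occ σ ι s₁ s₂ (ModName.E i) (ModName.B i) = 0 := by
      exact wgt_zero_of_not_arc (by rw [modArc_vv occ (M := ModName.E i) (N := ModName.B i) rfl rfl]; simp [rk])
    have hzEC : wgt occ σ ι s₁ s₂ (ModName.E i) (ModName.C i) = 0 := by
      exact wgt_zero_of_not_arc (by rw [modArc_vv occ (M := ModName.E i) (N := ModName.C i) rfl rfl]; simp [rk])
    have hzED : wgt occ σ ι s₁ s₂ (ModName.E i) (ModName.D i) = 0 := by
      exact wgt_zero_of_ord (ordM_le_of_loc rfl (by simp [locM, hσi] <;> omega))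
    have hzEE : wgt occ σ ι s₁ s₂ (ModName.E i) (ModName.E i) = 0 := by
      exact wgt_zero_of_ord (ordM_le_of_loc rfl (by simp [locM, hσi] <;> omega))
    have hzEF : wgt occ σ ι s₁ s₂ (ModName.E i) (ModName.F i) = 0 := by
      exact wgt_zero_of_ord (ordM_le_of_loc rfl (by simp [locM, hσi] <;> omega))
    have hzFA : wgt occ σ ι s₁ s₂ (ModName.F i) (ModName.A i) = 0 := by
      exact wgt_zero_of_not_arc (by rw [modArc_vv occ (M := ModName.F i) (N := ModName.A i) rfl rfl]; simp [rk])
    have hzFB : wgt occ σ ι s₁ s₂ (ModName.F i) (ModName.B i) = 0 := by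
      exact wgt_zero_of_not_arc (by rw [modArc_vv occ (M := ModName.F i) (N := ModName.B i) rfl rfl]; simp [rk])
    have hzFC : wgt occ σ ι s₁ s₂ (ModName.F i) (ModName.C i) = 0 := by
      exact wgt_zero_of_not_arc (by rw [modArc_vv occ (M := ModName.F i) (N := ModName.C i) rfl rfl]; simp [rk])
    have hzFD : wgt occ σ ι s₁ s₂ (ModName.F i) (ModName.D i) = 0 := by
      exact wgt_zero_of_ord (ordM_le_of_loc rfl (by simp [locM, hσi] <;> omega))
    have hzFE : wgt occ σ ι s₁ s₂ (ModName.F i) (ModName.E i) = 0 := by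
      exact wgt_zero_of_not_arc (by rw [modArc_vv occ (M := ModName.F i) (N := ModName.E i) rfl rfl]; simp [rk])
    have hzFF : wgt occ σ ι s₁ s₂ (ModName.F i) (ModName.F i) = 0 := by
      exact wgt_zero_of_ord (ordM_le_of_loc rfl (by simp [locM, hσi] <;> omega))
    have hEms : msize n m s₁ s₂ (ModName.E i) = s₁ + 2 := by simp [msize, hi hσi]
    have hbad : wgt occ σ ι s₁ s₂ (ModName.D i) (ModName.E i) ≤ s₁ * s₁ + 2 * s₁ := by
      have h := wgt_le (s₁ := s₁) (s₂ := s₂) (occ := occ) (σ := σ) (ι := ι) (M := ModName.D i) (N := ModName.E i)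
      rw [hEms] at h
      simp only [msize] at h
      have h2 : s₁ * (s₁ + 2) = s₁ * s₁ + 2 * s₁ := by ring
      omega
    omega
  · rw [if_pos rfl]
    have hzAA : wgt occ σ ι s₁ s₂ (ModName.A i) (ModName.A i) = 0 := by
      exact wgt_zero_of_ord (ordM_le_of_loc rfl (by simp [locM, hσi] <;> omega))
    have hzAB : wgt occ σ ι s₁ s₂ (ModName.A i) (ModName.B i) = 0 := by
      exact wgt_zero_of_ord (ordM_le_of_loc rfl (by simp [locM, hσi] <;> omega))
    have hzAC : wgt occ σ ι s₁ s₂ (ModName.A i) (ModName.C i) = 0 := by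
      exact wgt_zero_of_ord (ordM_le_of_loc rfl (by simp [locM, hσi] <;> omega))
    have hzAD : wgt occ σ ι s₁ s₂ (ModName.A i) (ModName.D i) = 0 := by
      exact wgt_zero_of_ord (ordM_le_of_loc rfl (by simp [locM, hσi] <;> omega))
    have hzAE : wgt occ σ ι s₁ s₂ (ModName.A i) (ModName.E i) = 0 := by
      exact wgt_zero_of_ord (ordM_le_of_loc rfl (by simp [locM, hσi] <;> omega))
    have hzAF : wgt occ σ ι s₁ s₂ (ModName.A i) (ModName.F i) = 0 := by
      exact wgt_zero_of_ord (ordM_le_of_loc rfl (by simp [locM, hσi] <;> omega))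
    have hzBA : wgt occ σ ι s₁ s₂ (ModName.B i) (ModName.A i) = 0 := by
      exact wgt_zero_of_not_arc (by rw [modArc_vv occ (M := ModName.B i) (N := ModName.A i) rfl rfl]; simp [rk])
    have hzBB : wgt occ σ ι s₁ s₂ (ModName.B i) (ModName.B i) = 0 := by
      exact wgt_zero_of_ord (ordM_le_of_loc rfl (by simp [locM, hσi] <;> omega))
    have hzBC : wgt occ σ ι s₁ s₂ (ModName.B i) (ModName.C i) = 0 := by
      exact wgt_zero_of_ord (ordM_le_of_loc rfl (by simp [locM, hσi] <;> omega))
    have hzBD : wgt occ σ ι s₁ s₂ (ModName.B i) (ModName.D i) = 0 := by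
      exact wgt_zero_of_ord (ordM_le_of_loc rfl (by simp [locM, hσi] <;> omega))
    have hzBE : wgt occ σ ι s₁ s₂ (ModName.B i) (ModName.E i) = 0 := by
      exact wgt_zero_of_ord (ordM_le_of_loc rfl (by simp [locM, hσi] <;> omega))
    have hzBF : wgt occ σ ι s₁ s₂ (ModName.B i) (ModName.F i) = 0 := by
      exact wgt_zero_of_ord (ordM_le_of_loc rfl (by simp [locM, hσi] <;> omega))
    have hzCA : wgt occ σ ι s₁ s₂ (ModName.C i) (ModName.A i) = 0 := by
      exact wgt_zero_of_not_arc (by rw [modArc_vv occ (M := ModName.C i) (N := ModName.A i) rfl rfl]; simp [rk])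
    have hzCB : wgt occ σ ι s₁ s₂ (ModName.C i) (ModName.B i) = 0 := by
      exact wgt_zero_of_not_arc (by rw [modArc_vv occ (M := ModName.C i) (N := ModName.B i) rfl rfl]; simp [rk])
    have hzCC : wgt occ σ ι s₁ s₂ (ModName.C i) (ModName.C i) = 0 := by
      exact wgt_zero_of_ord (ordM_le_of_loc rfl (by simp [locM, hσi] <;> omega))
    have hzCD : wgt occ σ ι s₁ s₂ (ModName.C i) (ModName.D i) = 0 := by
      exact wgt_zero_of_ord (ordM_le_of_loc rfl (by simp [locM, hσi] <;> omega))
    have hzCE : wgt occ σ ι s₁ s₂ (ModName.C i) (ModName.E i) = 0 := by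
      exact wgt_zero_of_ord (ordM_le_of_loc rfl (by simp [locM, hσi] <;> omega))
    have hzCF : wgt occ σ ι s₁ s₂ (ModName.C i) (ModName.F i) = 0 := by
      exact wgt_zero_of_ord (ordM_le_of_loc rfl (by simp [locM, hσi] <;> omega))
    have hzDA : wgt occ σ ι s₁ s₂ (ModName.D i) (ModName.A i) = 0 := by
      exact wgt_zero_of_not_arc (by rw [modArc_vv occ (M := ModName.D i) (N := ModName.A i) rfl rfl]; simp [rk])
    have hzDB : wgt occ σ ι s₁ s₂ (ModName.D i) (ModName.B i) = 0 := by
      exact wgt_zero_of_not_arc (by rw [modArc_vv occ (M := ModName.D i) (N := ModName.B i) rfl rfl]; simp [rk])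
    have hzDC : wgt occ σ ι s₁ s₂ (ModName.D i) (ModName.C i) = 0 := by
      exact wgt_zero_of_not_arc (by rw [modArc_vv occ (M := ModName.D i) (N := ModName.C i) rfl rfl]; simp [rk])
    have hzDD : wgt occ σ ι s₁ s₂ (ModName.D i) (ModName.D i) = 0 := by
      exact wgt_zero_of_ord (ordM_le_of_loc rfl (by simp [locM, hσi] <;> omega))
    have hzDE : wgt occ σ ι s₁ s₂ (ModName.D i) (ModName.E i) = 0 := by
      exact wgt_zero_of_ord (ordM_le_of_loc rfl (by simp [locM, hσi] <;> omega))
    have hzDF : wgt occ σ ι s₁ s₂ (ModName.D i) (ModName.F i) = 0 := by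
      exact wgt_zero_of_ord (ordM_le_of_loc rfl (by simp [locM, hσi] <;> omega))
    have hzEA : wgt occ σ ι s₁ s₂ (ModName.E i) (ModName.A i) = 0 := by
      exact wgt_zero_of_not_arc (by rw [modArc_vv occ (M := ModName.E i) (N := ModName.A i) rfl rfl]; simp [rk])
    have hzEB : wgt occ σ ι s₁ s₂ (ModName.E i) (ModName.B i) = 0 := by
      exact wgt_zero_of_not_arc (by rw [modArc_vv occ (M := ModName.E i) (N := ModName.B i) rfl rfl]; simp [rk])
    have hzEC : wgt occ σ ι s₁ s₂ (ModName.E i) (ModName.C i) = 0 := by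
      exact wgt_zero_of_not_arc (by rw [modArc_vv occ (M := ModName.E i) (N := ModName.C i) rfl rfl]; simp [rk])
    have hzED : wgt occ σ ι s₁ s₂ (ModName.E i) (ModName.D i) = 0 := by
      exact wgt_zero_of_not_arc (by rw [modArc_vv occ (M := ModName.E i) (N := ModName.D i) rfl rfl]; simp [rk])
    have hzEE : wgt occ σ ι s₁ s₂ (ModName.E i) (ModName.E i) = 0 := by
      exact wgt_zero_of_ord (ordM_le_of_loc rfl (by simp [locM, hσi] <;> omega))
    have hzEF : wgt occ σ ι s₁ s₂ (ModName.E i) (ModName.F i) = 0 := by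
      exact wgt_zero_of_ord (ordM_le_of_loc rfl (by simp [locM, hσi] <;> omega))
    have hzFA : wgt occ σ ι s₁ s₂ (ModName.F i) (ModName.A i) = 0 := by
      exact wgt_zero_of_not_arc (by rw [modArc_vv occ (M := ModName.F i) (N := ModName.A i) rfl rfl]; simp [rk])
    have hzFB : wgt occ σ ι s₁ s₂ (ModName.F i) (ModName.B i) = 0 := by
      exact wgt_zero_of_not_arc (by rw [modArc_vv occ (M := ModName.F i) (N := ModName.B i) rfl rfl]; simp [rk])
    have hzFC : wgt occ σ ι s₁ s₂ (ModName.F i) (ModName.C i) = 0 := by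
      exact wgt_zero_of_not_arc (by rw [modArc_vv occ (M := ModName.F i) (N := ModName.C i) rfl rfl]; simp [rk])
    have hzFE : wgt occ σ ι s₁ s₂ (ModName.F i) (ModName.E i) = 0 := by
      exact wgt_zero_of_not_arc (by rw [modArc_vv occ (M := ModName.F i) (N := ModName.E i) rfl rfl]; simp [rk])
    have hzFF : wgt occ σ ι s₁ s₂ (ModName.F i) (ModName.F i) = 0 := by
      exact wgt_zero_of_ord (ordM_le_of_loc rfl (by simp [locM, hσi] <;> omega))
    have hbad : wgt occ σ ι s₁ s₂ (ModName.F i) (ModName.D i) ≤ s₁ * s₁ := by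
      have h := wgt_le (s₁ := s₁) (s₂ := s₂) (occ := occ) (σ := σ) (ι := ι) (M := ModName.F i) (N := ModName.D i)
      simp only [msize] at h
      omega
    omega


lemma wgt_zero_offgroup (occ : Fin n → Fin m → Option Bool) (σ : Fin n → Bool)
    (ι : Fin m → Fin n) {i i' : Fin n} {M N : ModName n m} (hne : i ≠ i')
    (hM : grp? M = some i) (hN : grp? N = some i') : wgt occ σ ι s₁ s₂ M N = 0 := by
  rcases Nat.lt_or_ge (i : ℕ) (i' : ℕ) with h | h
  · refine wgt_zero_of_ord (le_of_lt (ordM_lt_of_g ?_))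
    rw [grp?_of_gI hM, grp?_of_gI hN]
    exact h
  · refine wgt_zero_of_not_arc ?_
    rw [modArc_vv occ hM hN]
    rintro (hlt | ⟨heq, -⟩)
    · exact absurd (Fin.lt_def.mp hlt) (by omega)
    · exact hne heq

lemma grp?_Vm (i : Fin n) (r : Fin 6) : grp? (Vm (m := m) i r) = some i := by
  fin_cases r <;> rfl

lemma rk_Vm (i : Fin n) (r : Fin 6) : rk (Vm (m := m) i r) = (r : ℕ) := by
  fin_cases r <;> rfl

lemma vv_off (occ : Fin n → Fin m → Option Bool) (σ : Fin n → Bool) (ι : Fin m → Fin n)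
    (i i' : Fin n) (hne : i ≠ i') :
    ∑ r : Fin 6, ∑ r' : Fin 6, wgt occ σ ι s₁ s₂ (Vm i r) (Vm i' r') = 0 := by
  apply Finset.sum_eq_zero
  intro r _
  apply Finset.sum_eq_zero
  intro r' _
  exact wgt_zero_offgroup occ σ ι hne (grp?_Vm i r) (grp?_Vm i' r')

lemma tv_bound (occ : Fin n → Fin m → Option Bool) (σ : Fin n → Bool) (ι : Fin m → Fin n)
    (j : Fin m) (i : Fin n) (hok : occ (ι j) j = some (σ (ι j))) :
    ((∑ r : Fin 6, wgt occ σ ι s₁ s₂ (.T j) (Vm i r)) +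
      ∑ r : Fin 6, wgt occ σ ι s₁ s₂ (Vm i r) (.T j)) ≤
      (if i = ι j then 2 * (s₁ * s₂) else 3 * (s₁ * s₂) + 3 * s₂) := by
  simp only [Fin.sum_univ_six, Vm0, Vm1, Vm2, Vm3, Vm4, Vm5]
  by_cases hij : i = ι j
  · subst hij
    rw [if_pos rfl]
    rcases hσ2 : σ (ι j) with _ | _ <;> rw [hσ2] at hok
    · have hTA : wgt occ σ ι s₁ s₂ (ModName.T j) (ModName.A (ι j)) ≤ s₁ * s₂ :=
        le_trans wgt_le (le_of_eq (Nat.mul_comm s₂ s₁))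
      have hTB : wgt occ σ ι s₁ s₂ (ModName.T j) (ModName.B (ι j)) = 0 :=
        wgt_zero_of_not_arc (by rw [modArc_tv occ (M := ModName.B (ι j)) rfl, hok]; simp [tBeats, rk])
      have hTC : wgt occ σ ι s₁ s₂ (ModName.T j) (ModName.C (ι j)) ≤ s₁ * s₂ :=
        le_trans wgt_le (le_of_eq (Nat.mul_comm s₂ s₁))
      have hTD : wgt occ σ ι s₁ s₂ (ModName.T j) (ModName.D (ι j)) = 0 :=
        wgt_zero_of_ord (ordM_le_of_loc (M := ModName.T j) (N := ModName.D (ι j)) rfl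
          (by simp [locM, hσ2] <;> omega))
      have hTE : wgt occ σ ι s₁ s₂ (ModName.T j) (ModName.E (ι j)) = 0 :=
        wgt_zero_of_not_arc (by rw [modArc_tv occ (M := ModName.E (ι j)) rfl, hok]; simp [tBeats, rk])
      have hTF : wgt occ σ ι s₁ s₂ (ModName.T j) (ModName.F (ι j)) = 0 :=
        wgt_zero_of_not_arc (by rw [modArc_tv occ (M := ModName.F (ι j)) rfl, hok]; simp [tBeats, rk])
      have hXA : wgt occ σ ι s₁ s₂ (ModName.A (ι j)) (ModName.T j) = 0 :=
        wgt_zero_of_not_arc (by rw [modArc_vt occ (M := ModName.A (ι j)) rfl, hok]; simp [tBeats, rk])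
      have hXB : wgt occ σ ι s₁ s₂ (ModName.B (ι j)) (ModName.T j) = 0 :=
        wgt_zero_of_ord (ordM_le_of_loc (M := ModName.B (ι j)) (N := ModName.T j) rfl
          (by simp [locM, hσ2] <;> omega))
      have hXC : wgt occ σ ι s₁ s₂ (ModName.C (ι j)) (ModName.T j) = 0 :=
        wgt_zero_of_not_arc (by rw [modArc_vt occ (M := ModName.C (ι j)) rfl, hok]; simp [tBeats, rk])
      have hXD : wgt occ σ ι s₁ s₂ (ModName.D (ι j)) (ModName.T j) = 0 :=
        wgt_zero_of_not_arc (by rw [modArc_vt occ (M := ModName.D (ι j)) rfl, hok]; simp [tBeats, rk])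
      have hXE : wgt occ σ ι s₁ s₂ (ModName.E (ι j)) (ModName.T j) = 0 :=
        wgt_zero_of_ord (ordM_le_of_loc (M := ModName.E (ι j)) (N := ModName.T j) rfl
          (by simp [locM, hσ2] <;> omega))
      have hXF : wgt occ σ ι s₁ s₂ (ModName.F (ι j)) (ModName.T j) = 0 :=
        wgt_zero_of_ord (ordM_le_of_loc (M := ModName.F (ι j)) (N := ModName.T j) rfl
          (by simp [locM, hσ2] <;> omega))
      omega
    · have hTA : wgt occ σ ι s₁ s₂ (ModName.T j) (ModName.A (ι j)) ≤ s₁ * s₂ :=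
        le_trans wgt_le (le_of_eq (Nat.mul_comm s₂ s₁))
      have hTB : wgt occ σ ι s₁ s₂ (ModName.T j) (ModName.B (ι j)) ≤ s₁ * s₂ :=
        le_trans wgt_le (le_of_eq (Nat.mul_comm s₂ s₁))
      have hTC : wgt occ σ ι s₁ s₂ (ModName.T j) (ModName.C (ι j)) = 0 :=
        wgt_zero_of_not_arc (by rw [modArc_tv occ (M := ModName.C (ι j)) rfl, hok]; simp [tBeats, rk])
      have hTD : wgt occ σ ι s₁ s₂ (ModName.T j) (ModName.D (ι j)) = 0 :=
        wgt_zero_of_not_arc (by rw [modArc_tv occ (M := ModName.D (ι j)) rfl, hok]; simp [tBeats, rk])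
      have hTE : wgt occ σ ι s₁ s₂ (ModName.T j) (ModName.E (ι j)) = 0 :=
        wgt_zero_of_not_arc (by rw [modArc_tv occ (M := ModName.E (ι j)) rfl, hok]; simp [tBeats, rk])
      have hTF : wgt occ σ ι s₁ s₂ (ModName.T j) (ModName.F (ι j)) = 0 :=
        wgt_zero_of_ord (ordM_le_of_loc (M := ModName.T j) (N := ModName.F (ι j)) rfl
          (by simp [locM, hσ2] <;> omega))
      have hXA : wgt occ σ ι s₁ s₂ (ModName.A (ι j)) (ModName.T j) = 0 :=
        wgt_zero_of_not_arc (by rw [modArc_vt occ (M := ModName.A (ι j)) rfl, hok]; simp [tBeats, rk])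
      have hXB : wgt occ σ ι s₁ s₂ (ModName.B (ι j)) (ModName.T j) = 0 :=
        wgt_zero_of_not_arc (by rw [modArc_vt occ (M := ModName.B (ι j)) rfl, hok]; simp [tBeats, rk])
      have hXC : wgt occ σ ι s₁ s₂ (ModName.C (ι j)) (ModName.T j) = 0 :=
        wgt_zero_of_ord (ordM_le_of_loc (M := ModName.C (ι j)) (N := ModName.T j) rfl
          (by simp [locM, hσ2] <;> omega))
      have hXD : wgt occ σ ι s₁ s₂ (ModName.D (ι j)) (ModName.T j) = 0 :=
        wgt_zero_of_ord (ordM_le_of_loc (M := ModName.D (ι j)) (N := ModName.T j) rfl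
          (by simp [locM, hσ2] <;> omega))
      have hXE : wgt occ σ ι s₁ s₂ (ModName.E (ι j)) (ModName.T j) = 0 :=
        wgt_zero_of_ord (ordM_le_of_loc (M := ModName.E (ι j)) (N := ModName.T j) rfl
          (by simp [locM, hσ2] <;> omega))
      have hXF : wgt occ σ ι s₁ s₂ (ModName.F (ι j)) (ModName.T j) = 0 :=
        wgt_zero_of_not_arc (by rw [modArc_vt occ (M := ModName.F (ι j)) rfl, hok]; simp [tBeats, rk])
      omega
  · rw [if_neg hij]
    rcases Nat.lt_or_ge (i : ℕ) ((ι j : Fin n) : ℕ) with hlt | hge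
    · rcases ho : occ i j with _ | _ | _
      · have hTA : wgt occ σ ι s₁ s₂ (ModName.T j) (ModName.A i) ≤ s₁ * s₂ :=
          le_trans wgt_le (le_of_eq (Nat.mul_comm s₂ s₁))
        have hTB : wgt occ σ ι s₁ s₂ (ModName.T j) (ModName.B i) ≤ s₁ * s₂ :=
          le_trans wgt_le (le_of_eq (Nat.mul_comm s₂ s₁))
        have hTC : wgt occ σ ι s₁ s₂ (ModName.T j) (ModName.C i) ≤ s₁ * s₂ :=
          le_trans wgt_le (le_of_eq (Nat.mul_comm s₂ s₁))
        have hTD : wgt occ σ ι s₁ s₂ (ModName.T j) (ModName.D i) = 0 :=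
          wgt_zero_of_not_arc (by rw [modArc_tv occ (M := ModName.D i) rfl, ho]; simp [tBeats, rk])
        have hTE : wgt occ σ ι s₁ s₂ (ModName.T j) (ModName.E i) = 0 :=
          wgt_zero_of_not_arc (by rw [modArc_tv occ (M := ModName.E i) rfl, ho]; simp [tBeats, rk])
        have hTF : wgt occ σ ι s₁ s₂ (ModName.T j) (ModName.F i) = 0 :=
          wgt_zero_of_not_arc (by rw [modArc_tv occ (M := ModName.F i) rfl, ho]; simp [tBeats, rk])
        have hXA : wgt occ σ ι s₁ s₂ (ModName.A i) (ModName.T j) = 0 :=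
          wgt_zero_of_ord (le_of_lt (ordM_lt_of_g (M := ModName.A i) (N := ModName.T j) hlt))
        have hXB : wgt occ σ ι s₁ s₂ (ModName.B i) (ModName.T j) = 0 :=
          wgt_zero_of_ord (le_of_lt (ordM_lt_of_g (M := ModName.B i) (N := ModName.T j) hlt))
        have hXC : wgt occ σ ι s₁ s₂ (ModName.C i) (ModName.T j) = 0 :=
          wgt_zero_of_ord (le_of_lt (ordM_lt_of_g (M := ModName.C i) (N := ModName.T j) hlt))
        have hXD : wgt occ σ ι s₁ s₂ (ModName.D i) (ModName.T j) = 0 :=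
          wgt_zero_of_ord (le_of_lt (ordM_lt_of_g (M := ModName.D i) (N := ModName.T j) hlt))
        have hXE : wgt occ σ ι s₁ s₂ (ModName.E i) (ModName.T j) = 0 :=
          wgt_zero_of_ord (le_of_lt (ordM_lt_of_g (M := ModName.E i) (N := ModName.T j) hlt))
        have hXF : wgt occ σ ι s₁ s₂ (ModName.F i) (ModName.T j) = 0 :=
          wgt_zero_of_ord (le_of_lt (ordM_lt_of_g (M := ModName.F i) (N := ModName.T j) hlt))
        omega
      · have hTA : wgt occ σ ι s₁ s₂ (ModName.T j) (ModName.A i) ≤ s₁ * s₂ :=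
          le_trans wgt_le (le_of_eq (Nat.mul_comm s₂ s₁))
        have hTB : wgt occ σ ι s₁ s₂ (ModName.T j) (ModName.B i) = 0 :=
          wgt_zero_of_not_arc (by rw [modArc_tv occ (M := ModName.B i) rfl, ho]; simp [tBeats, rk])
        have hTC : wgt occ σ ι s₁ s₂ (ModName.T j) (ModName.C i) ≤ s₁ * s₂ :=
          le_trans wgt_le (le_of_eq (Nat.mul_comm s₂ s₁))
        have hTD : wgt occ σ ι s₁ s₂ (ModName.T j) (ModName.D i) ≤ s₁ * s₂ :=
          le_trans wgt_le (le_of_eq (Nat.mul_comm s₂ s₁))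
        have hTE : wgt occ σ ι s₁ s₂ (ModName.T j) (ModName.E i) = 0 :=
          wgt_zero_of_not_arc (by rw [modArc_tv occ (M := ModName.E i) rfl, ho]; simp [tBeats, rk])
        have hTF : wgt occ σ ι s₁ s₂ (ModName.T j) (ModName.F i) = 0 :=
          wgt_zero_of_not_arc (by rw [modArc_tv occ (M := ModName.F i) rfl, ho]; simp [tBeats, rk])
        have hXA : wgt occ σ ι s₁ s₂ (ModName.A i) (ModName.T j) = 0 :=
          wgt_zero_of_ord (le_of_lt (ordM_lt_of_g (M := ModName.A i) (N := ModName.T j) hlt))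
        have hXB : wgt occ σ ι s₁ s₂ (ModName.B i) (ModName.T j) = 0 :=
          wgt_zero_of_ord (le_of_lt (ordM_lt_of_g (M := ModName.B i) (N := ModName.T j) hlt))
        have hXC : wgt occ σ ι s₁ s₂ (ModName.C i) (ModName.T j) = 0 :=
          wgt_zero_of_ord (le_of_lt (ordM_lt_of_g (M := ModName.C i) (N := ModName.T j) hlt))
        have hXD : wgt occ σ ι s₁ s₂ (ModName.D i) (ModName.T j) = 0 :=
          wgt_zero_of_ord (le_of_lt (ordM_lt_of_g (M := ModName.D i) (N := ModName.T j) hlt))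
        have hXE : wgt occ σ ι s₁ s₂ (ModName.E i) (ModName.T j) = 0 :=
          wgt_zero_of_ord (le_of_lt (ordM_lt_of_g (M := ModName.E i) (N := ModName.T j) hlt))
        have hXF : wgt occ σ ι s₁ s₂ (ModName.F i) (ModName.T j) = 0 :=
          wgt_zero_of_ord (le_of_lt (ordM_lt_of_g (M := ModName.F i) (N := ModName.T j) hlt))
        omega
      · have hTA : wgt occ σ ι s₁ s₂ (ModName.T j) (ModName.A i) ≤ s₁ * s₂ :=
          le_trans wgt_le (le_of_eq (Nat.mul_comm s₂ s₁))
        have hTB : wgt occ σ ι s₁ s₂ (ModName.T j) (ModName.B i) ≤ s₁ * s₂ :=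
          le_trans wgt_le (le_of_eq (Nat.mul_comm s₂ s₁))
        have hTC : wgt occ σ ι s₁ s₂ (ModName.T j) (ModName.C i) = 0 :=
          wgt_zero_of_not_arc (by rw [modArc_tv occ (M := ModName.C i) rfl, ho]; simp [tBeats, rk])
        have hTD : wgt occ σ ι s₁ s₂ (ModName.T j) (ModName.D i) = 0 :=
          wgt_zero_of_not_arc (by rw [modArc_tv occ (M := ModName.D i) rfl, ho]; simp [tBeats, rk])
        have hTE : wgt occ σ ι s₁ s₂ (ModName.T j) (ModName.E i) = 0 :=
          wgt_zero_of_not_arc (by rw [modArc_tv occ (M := ModName.E i) rfl, ho]; simp [tBeats, rk])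
        have hTF : wgt occ σ ι s₁ s₂ (ModName.T j) (ModName.F i) ≤ s₁ * s₂ :=
          le_trans wgt_le (le_of_eq (Nat.mul_comm s₂ s₁))
        have hXA : wgt occ σ ι s₁ s₂ (ModName.A i) (ModName.T j) = 0 :=
          wgt_zero_of_ord (le_of_lt (ordM_lt_of_g (M := ModName.A i) (N := ModName.T j) hlt))
        have hXB : wgt occ σ ι s₁ s₂ (ModName.B i) (ModName.T j) = 0 :=
          wgt_zero_of_ord (le_of_lt (ordM_lt_of_g (M := ModName.B i) (N := ModName.T j) hlt))
        have hXC : wgt occ σ ι s₁ s₂ (ModName.C i) (ModName.T j) = 0 :=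
          wgt_zero_of_ord (le_of_lt (ordM_lt_of_g (M := ModName.C i) (N := ModName.T j) hlt))
        have hXD : wgt occ σ ι s₁ s₂ (ModName.D i) (ModName.T j) = 0 :=
          wgt_zero_of_ord (le_of_lt (ordM_lt_of_g (M := ModName.D i) (N := ModName.T j) hlt))
        have hXE : wgt occ σ ι s₁ s₂ (ModName.E i) (ModName.T j) = 0 :=
          wgt_zero_of_ord (le_of_lt (ordM_lt_of_g (M := ModName.E i) (N := ModName.T j) hlt))
        have hXF : wgt occ σ ι s₁ s₂ (ModName.F i) (ModName.T j) = 0 :=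
          wgt_zero_of_ord (le_of_lt (ordM_lt_of_g (M := ModName.F i) (N := ModName.T j) hlt))
        omega
    · have hgt : ((ι j : Fin n) : ℕ) < (i : ℕ) := by
        rcases Nat.lt_or_ge ((ι j : Fin n) : ℕ) (i : ℕ) with h | h
        · exact h
        · exact absurd (Fin.ext (by omega)) hij
      rcases ho : occ i j with _ | _ | _
      · have hTA : wgt occ σ ι s₁ s₂ (ModName.T j) (ModName.A i) = 0 :=
          wgt_zero_of_ord (le_of_lt (ordM_lt_of_g (M := ModName.T j) (N := ModName.A i) hgt))
        have hTB : wgt occ σ ι s₁ s₂ (ModName.T j) (ModName.B i) = 0 :=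
          wgt_zero_of_ord (le_of_lt (ordM_lt_of_g (M := ModName.T j) (N := ModName.B i) hgt))
        have hTC : wgt occ σ ι s₁ s₂ (ModName.T j) (ModName.C i) = 0 :=
          wgt_zero_of_ord (le_of_lt (ordM_lt_of_g (M := ModName.T j) (N := ModName.C i) hgt))
        have hTD : wgt occ σ ι s₁ s₂ (ModName.T j) (ModName.D i) = 0 :=
          wgt_zero_of_ord (le_of_lt (ordM_lt_of_g (M := ModName.T j) (N := ModName.D i) hgt))
        have hTE : wgt occ σ ι s₁ s₂ (ModName.T j) (ModName.E i) = 0 :=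
          wgt_zero_of_ord (le_of_lt (ordM_lt_of_g (M := ModName.T j) (N := ModName.E i) hgt))
        have hTF : wgt occ σ ι s₁ s₂ (ModName.T j) (ModName.F i) = 0 :=
          wgt_zero_of_ord (le_of_lt (ordM_lt_of_g (M := ModName.T j) (N := ModName.F i) hgt))
        have hXA : wgt occ σ ι s₁ s₂ (ModName.A i) (ModName.T j) = 0 :=
          wgt_zero_of_not_arc (by rw [modArc_vt occ (M := ModName.A i) rfl, ho]; simp [tBeats, rk])
        have hXB : wgt occ σ ι s₁ s₂ (ModName.B i) (ModName.T j) = 0 :=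
          wgt_zero_of_not_arc (by rw [modArc_vt occ (M := ModName.B i) rfl, ho]; simp [tBeats, rk])
        have hXC : wgt occ σ ι s₁ s₂ (ModName.C i) (ModName.T j) = 0 :=
          wgt_zero_of_not_arc (by rw [modArc_vt occ (M := ModName.C i) rfl, ho]; simp [tBeats, rk])
        have hXD : wgt occ σ ι s₁ s₂ (ModName.D i) (ModName.T j) ≤ s₁ * s₂ := wgt_le
        have hXE : wgt occ σ ι s₁ s₂ (ModName.E i) (ModName.T j) ≤ s₁ * s₂ + 3 * s₂ := by
          have h := wgt_le (s₁ := s₁) (s₂ := s₂) (occ := occ) (σ := σ) (ι := ι)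
            (M := ModName.E i) (N := ModName.T j)
          have h2 : msize n m s₁ s₂ (ModName.E i) * msize n m s₁ s₂ (ModName.T j) ≤
              (s₁ + 3) * s₂ := Nat.mul_le_mul_right _ (msize_E_le i)
          have h3 : (s₁ + 3) * s₂ = s₁ * s₂ + 3 * s₂ := by ring
          simp only [msize] at h h2
          omega
        have hXF : wgt occ σ ι s₁ s₂ (ModName.F i) (ModName.T j) ≤ s₁ * s₂ := wgt_le
        omega
      · have hTA : wgt occ σ ι s₁ s₂ (ModName.T j) (ModName.A i) = 0 :=
          wgt_zero_of_ord (le_of_lt (ordM_lt_of_g (M := ModName.T j) (N := ModName.A i) hgt))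
        have hTB : wgt occ σ ι s₁ s₂ (ModName.T j) (ModName.B i) = 0 :=
          wgt_zero_of_ord (le_of_lt (ordM_lt_of_g (M := ModName.T j) (N := ModName.B i) hgt))
        have hTC : wgt occ σ ι s₁ s₂ (ModName.T j) (ModName.C i) = 0 :=
          wgt_zero_of_ord (le_of_lt (ordM_lt_of_g (M := ModName.T j) (N := ModName.C i) hgt))
        have hTD : wgt occ σ ι s₁ s₂ (ModName.T j) (ModName.D i) = 0 :=
          wgt_zero_of_ord (le_of_lt (ordM_lt_of_g (M := ModName.T j) (N := ModName.D i) hgt))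
        have hTE : wgt occ σ ι s₁ s₂ (ModName.T j) (ModName.E i) = 0 :=
          wgt_zero_of_ord (le_of_lt (ordM_lt_of_g (M := ModName.T j) (N := ModName.E i) hgt))
        have hTF : wgt occ σ ι s₁ s₂ (ModName.T j) (ModName.F i) = 0 :=
          wgt_zero_of_ord (le_of_lt (ordM_lt_of_g (M := ModName.T j) (N := ModName.F i) hgt))
        have hXA : wgt occ σ ι s₁ s₂ (ModName.A i) (ModName.T j) = 0 :=
          wgt_zero_of_not_arc (by rw [modArc_vt occ (M := ModName.A i) rfl, ho]; simp [tBeats, rk])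
        have hXB : wgt occ σ ι s₁ s₂ (ModName.B i) (ModName.T j) ≤ s₁ * s₂ := wgt_le
        have hXC : wgt occ σ ι s₁ s₂ (ModName.C i) (ModName.T j) = 0 :=
          wgt_zero_of_not_arc (by rw [modArc_vt occ (M := ModName.C i) rfl, ho]; simp [tBeats, rk])
        have hXD : wgt occ σ ι s₁ s₂ (ModName.D i) (ModName.T j) = 0 :=
          wgt_zero_of_not_arc (by rw [modArc_vt occ (M := ModName.D i) rfl, ho]; simp [tBeats, rk])
        have hXE : wgt occ σ ι s₁ s₂ (ModName.E i) (ModName.T j) ≤ s₁ * s₂ + 3 * s₂ := by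
          have h := wgt_le (s₁ := s₁) (s₂ := s₂) (occ := occ) (σ := σ) (ι := ι)
            (M := ModName.E i) (N := ModName.T j)
          have h2 : msize n m s₁ s₂ (ModName.E i) * msize n m s₁ s₂ (ModName.T j) ≤
              (s₁ + 3) * s₂ := Nat.mul_le_mul_right _ (msize_E_le i)
          have h3 : (s₁ + 3) * s₂ = s₁ * s₂ + 3 * s₂ := by ring
          simp only [msize] at h h2
          omega
        have hXF : wgt occ σ ι s₁ s₂ (ModName.F i) (ModName.T j) ≤ s₁ * s₂ := wgt_le
        omega
      · have hTA : wgt occ σ ι s₁ s₂ (ModName.T j) (ModName.A i) = 0 :=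
          wgt_zero_of_ord (le_of_lt (ordM_lt_of_g (M := ModName.T j) (N := ModName.A i) hgt))
        have hTB : wgt occ σ ι s₁ s₂ (ModName.T j) (ModName.B i) = 0 :=
          wgt_zero_of_ord (le_of_lt (ordM_lt_of_g (M := ModName.T j) (N := ModName.B i) hgt))
        have hTC : wgt occ σ ι s₁ s₂ (ModName.T j) (ModName.C i) = 0 :=
          wgt_zero_of_ord (le_of_lt (ordM_lt_of_g (M := ModName.T j) (N := ModName.C i) hgt))
        have hTD : wgt occ σ ι s₁ s₂ (ModName.T j) (ModName.D i) = 0 :=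
          wgt_zero_of_ord (le_of_lt (ordM_lt_of_g (M := ModName.T j) (N := ModName.D i) hgt))
        have hTE : wgt occ σ ι s₁ s₂ (ModName.T j) (ModName.E i) = 0 :=
          wgt_zero_of_ord (le_of_lt (ordM_lt_of_g (M := ModName.T j) (N := ModName.E i) hgt))
        have hTF : wgt occ σ ι s₁ s₂ (ModName.T j) (ModName.F i) = 0 :=
          wgt_zero_of_ord (le_of_lt (ordM_lt_of_g (M := ModName.T j) (N := ModName.F i) hgt))
        have hXA : wgt occ σ ι s₁ s₂ (ModName.A i) (ModName.T j) = 0 :=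
          wgt_zero_of_not_arc (by rw [modArc_vt occ (M := ModName.A i) rfl, ho]; simp [tBeats, rk])
        have hXB : wgt occ σ ι s₁ s₂ (ModName.B i) (ModName.T j) = 0 :=
          wgt_zero_of_not_arc (by rw [modArc_vt occ (M := ModName.B i) rfl, ho]; simp [tBeats, rk])
        have hXC : wgt occ σ ι s₁ s₂ (ModName.C i) (ModName.T j) ≤ s₁ * s₂ := wgt_le
        have hXD : wgt occ σ ι s₁ s₂ (ModName.D i) (ModName.T j) ≤ s₁ * s₂ := wgt_le
        have hXE : wgt occ σ ι s₁ s₂ (ModName.E i) (ModName.T j) ≤ s₁ * s₂ + 3 * s₂ := by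
          have h := wgt_le (s₁ := s₁) (s₂ := s₂) (occ := occ) (σ := σ) (ι := ι)
            (M := ModName.E i) (N := ModName.T j)
          have h2 : msize n m s₁ s₂ (ModName.E i) * msize n m s₁ s₂ (ModName.T j) ≤
              (s₁ + 3) * s₂ := Nat.mul_le_mul_right _ (msize_E_le i)
          have h3 : (s₁ + 3) * s₂ = s₁ * s₂ + 3 * s₂ := by ring
          simp only [msize] at h h2
          omega
        have hXF : wgt occ σ ι s₁ s₂ (ModName.F i) (ModName.T j) = 0 :=
          wgt_zero_of_not_arc (by rw [modArc_vt occ (M := ModName.F i) rfl, ho]; simp [tBeats, rk])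
        omega

lemma keyV_same {σ : Fin n → Bool} {ι : Fin m → Fin n} {u v : Vtx n m s₁ s₂}
    (h : u.1 = v.1) : keyV σ ι u < keyV σ ι v ↔ (u.2 : ℕ) < (v.2 : ℕ) := by
  obtain ⟨M, x⟩ := u
  obtain ⟨N, y⟩ := v
  cases h
  simp only [keyV]
  omega

lemma keyV_lt_iff_ord {σ : Fin n → Bool} {ι : Fin m → Fin n} {u v : Vtx n m s₁ s₂}
    (h : u.1 ≠ v.1) : keyV σ ι u < keyV σ ι v ↔ ordM σ ι u.1 < ordM σ ι v.1 := by
  constructor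
  · intro hk
    rcases Nat.lt_trichotomy (ordM σ ι u.1) (ordM σ ι v.1) with h1 | h1 | h1
    · exact h1
    · exact absurd (ordM_inj _ _ h1) h
    · exact absurd (keyV_lt_of_ord h1) (by omega)
  · exact keyV_lt_of_ord

lemma ord_top (σ : Fin n → Bool) (ι : Fin m → Fin n) (h : 0 < n)
    (hσn : σ ⟨n - 1, Nat.sub_lt h one_pos⟩ = true)
    (M : ModName n m) (hM : M ≠ .F ⟨n - 1, Nat.sub_lt h one_pos⟩) :
    ordM σ ι M < ordM σ ι (.F ⟨n - 1, Nat.sub_lt h one_pos⟩) := by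
  have htop : ordM σ ι (.F ⟨n - 1, Nat.sub_lt h one_pos⟩ : ModName n m)
      = (7 * m + 43) * (n - 1) + (7 * m + 40) := by
    simp [ordM, gI, locM, hσn]
  rcases Nat.lt_or_ge (gI ι M) (n - 1) with h1 | h1
  · exact ordM_lt_of_g (M := M)
      (N := (.F ⟨n - 1, Nat.sub_lt h one_pos⟩ : ModName n m)) (by simpa [gI] using h1)
  · have h2 : gI ι M ≤ n - 1 := by
      rcases M with i | i | i | i | i | i | j <;> simp only [gI] <;> omega
    have hg : gI ι M = n - 1 := le_antisymm h2 h1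
    have hlt : locM σ M < 7 * m + 40 := by
      rcases M with i | i | i | i | i | i | j <;> simp only [locM, gI] at hg ⊢
      · omega
      · omega
      · omega
      · split_ifs <;> omega
      · split_ifs <;> omega
      · exfalso
        exact hM (congrArg _ (Fin.ext hg))
      · omega
    rw [htop]
    simp only [ordM, hg]
    omega
end Stmt15Aux

open Finset in
/-- From a satisfying assignment of `φ` that sets exactly `k` variables (including `x_n`)
to true, one obtains a linear order placing the sink of `F_n` last whose implied feedback
arc set has size at most `n·s₁² + 2(n−k)·s₁ + (3n−1)m·s₁·s₂ + m²·s₂² + 9m(n−1)·s₂`. -/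
theorem stmt15 (n m s₁ s₂ : ℕ) (hn : 0 < n) (hm : 0 < m) (hs₁ : 0 < s₁) (hs₂ : 0 < s₂)
    (occ : Fin n → Fin m → Option Bool)
    (h3lit : ∀ j : Fin m, ({i : Fin n | occ i j ≠ none}).ncard ≤ 3)
    (hallF : ∀ j : Fin m, ∃ i : Fin n, occ i j = some false)
    (σ : Fin n → Bool) (hσ : Sat occ σ) (k : ℕ)
    (hk : (Finset.univ.filter (fun i : Fin n => σ i = true)).card = k)
    (hxn : σ ⟨n - 1, Nat.sub_lt hn one_pos⟩ = true) :
    ∃ r : Vtx n m s₁ s₂ → Vtx n m s₁ s₂ → Prop, IsStrictTotalOrder (Vtx n m s₁ s₂) r ∧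
      PlacesLast r (fnSink n m s₁ s₂ hn hs₁) ∧
      (fasSet (arc occ) r).ncard ≤
        n * s₁ ^ 2 + 2 * (n - k) * s₁ + (3 * n - 1) * m * s₁ * s₂ + m ^ 2 * s₂ ^ 2 +
          9 * m * (n - 1) * s₂ := by
  classical
  have hchoice : ∀ j : Fin m, ∃ i : Fin n, occ i j = some (σ i) := by
    intro j
    obtain ⟨i, hi⟩ := hσ j
    rcases hi with ⟨h1, h2⟩ | ⟨h1, h2⟩ <;> exact ⟨i, by rw [h2]; exact h1⟩
  obtain ⟨ι, hok⟩ : ∃ ι : Fin m → Fin n, ∀ j, occ (ι j) j = some (σ (ι j)) :=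
    ⟨fun j => Classical.choose (hchoice j), fun j => Classical.choose_spec (hchoice j)⟩
  refine ⟨fun u v => keyV σ ι u < keyV σ ι v, ?_, ?_, ?_⟩
  · exact
      { trichotomous := fun a b => by
          intro h1 h2
          rcases Nat.lt_trichotomy (keyV σ ι a) (keyV σ ι b) with h | h | h
          · exact absurd h h1
          · exact keyV_inj h
          · exact absurd h h2
        irrefl := fun a => Nat.lt_irrefl _
        trans := fun a b c => Nat.lt_trans }
  · intro u hu
    obtain ⟨M, x⟩ := u
    by_cases hM : M = ModName.F ⟨n - 1, Nat.sub_lt hn one_pos⟩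
    · subst hM
      have hx : (x : ℕ) ≠ s₁ - 1 := fun hval => hu (congrArg _ (Fin.ext hval))
      have hxlt : (x : ℕ) < s₁ := x.isLt
      show (s₁ + s₂ + 3) * ordM σ ι (ModName.F ⟨n - 1, Nat.sub_lt hn one_pos⟩ : ModName n m)
            + (x : ℕ) <
          (s₁ + s₂ + 3) * ordM σ ι (ModName.F ⟨n - 1, Nat.sub_lt hn one_pos⟩ : ModName n m)
            + (s₁ - 1)
      omega
    · exact keyV_lt_of_ord (ord_top σ ι hn hxn M hM)
  · have hchar : fasSet (arc occ) (fun u v => keyV σ ι u < keyV σ ι v) =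
        {w : Vtx n m s₁ s₂ × Vtx n m s₁ s₂ |
          w.1.1 ≠ w.2.1 ∧ modArc occ w.1.1 w.2.1 ∧ ordM σ ι w.2.1 < ordM σ ι w.1.1} := by
      ext ⟨u, v⟩
      simp only [fasSet, arc, Set.mem_setOf_eq]
      constructor
      · rintro ⟨hA | hA, hR⟩
        · exfalso
          have h2 := (keyV_same (σ := σ) (ι := ι) hA.1.symm).mp hR
          have h3 := hA.2
          omega
        · exact ⟨hA.1, hA.2, (keyV_lt_iff_ord hA.1.symm).mp hR⟩
      · rintro ⟨hne, harc, hord⟩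
        exact ⟨Or.inr ⟨hne, harc⟩, keyV_lt_of_ord hord⟩
    rw [hchar]
    have hset : {w : Vtx n m s₁ s₂ × Vtx n m s₁ s₂ |
          w.1.1 ≠ w.2.1 ∧ modArc occ w.1.1 w.2.1 ∧ ordM σ ι w.2.1 < ordM σ ι w.1.1} =
        ↑(Finset.univ.filter fun w : Vtx n m s₁ s₂ × Vtx n m s₁ s₂ =>
          w.1.1 ≠ w.2.1 ∧ modArc occ w.1.1 w.2.1 ∧ ordM σ ι w.2.1 < ordM σ ι w.1.1) := by
      ext w
      simp
    rw [hset, Set.ncard_coe_finset]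
    have hmap : ∀ w ∈ (Finset.univ.filter fun w : Vtx n m s₁ s₂ × Vtx n m s₁ s₂ =>
          w.1.1 ≠ w.2.1 ∧ modArc occ w.1.1 w.2.1 ∧ ordM σ ι w.2.1 < ordM σ ι w.1.1),
        (w.1.1, w.2.1) ∈ (Finset.univ.filter fun p : ModName n m × ModName n m =>
          p.1 ≠ p.2 ∧ modArc occ p.1 p.2 ∧ ordM σ ι p.2 < ordM σ ι p.1) := by
      intro w hw
      simp only [Finset.mem_filter, Finset.mem_univ, true_and] at hw ⊢
      exact hw
    rw [Finset.card_eq_sum_card_fiberwise hmap]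
    have hfib : ∀ p : ModName n m × ModName n m,
        (Finset.univ.filter fun w : Vtx n m s₁ s₂ × Vtx n m s₁ s₂ =>
          (w.1.1, w.2.1) = p).card = msize n m s₁ s₂ p.1 * msize n m s₁ s₂ p.2 := by
      rintro ⟨M, N⟩
      rw [← Finset.univ_product_univ]
      have hcong : (Finset.univ ×ˢ Finset.univ).filter
            (fun w : Vtx n m s₁ s₂ × Vtx n m s₁ s₂ => (w.1.1, w.2.1) = (M, N)) =
          (Finset.univ ×ˢ Finset.univ).filter (fun w => w.1.1 = M ∧ w.2.1 = N) :=
        Finset.filter_congr (fun x _ => by simp [Prod.ext_iff])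
      have h2 : ((Finset.univ ×ˢ Finset.univ).filter
            fun w : Vtx n m s₁ s₂ × Vtx n m s₁ s₂ => w.1.1 = M ∧ w.2.1 = N) =
          (Finset.univ.filter fun u : Vtx n m s₁ s₂ => u.1 = M) ×ˢ
            (Finset.univ.filter fun v : Vtx n m s₁ s₂ => v.1 = N) :=
        Finset.filter_product (fun u : Vtx n m s₁ s₂ => u.1 = M) (fun v : Vtx n m s₁ s₂ => v.1 = N)
      rw [hcong, h2, Finset.card_product, card_module, card_module]
    have hstep : ∀ p ∈ (Finset.univ.filter fun p : ModName n m × ModName n m =>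
          p.1 ≠ p.2 ∧ modArc occ p.1 p.2 ∧ ordM σ ι p.2 < ordM σ ι p.1),
        ((Finset.univ.filter fun w : Vtx n m s₁ s₂ × Vtx n m s₁ s₂ =>
          w.1.1 ≠ w.2.1 ∧ modArc occ w.1.1 w.2.1 ∧ ordM σ ι w.2.1 < ordM σ ι w.1.1).filter
            fun w => (w.1.1, w.2.1) = p).card ≤ wgt occ σ ι s₁ s₂ p.1 p.2 := by
      intro p hp
      simp only [Finset.mem_filter, Finset.mem_univ, true_and] at hp
      calc ((Finset.univ.filter fun w : Vtx n m s₁ s₂ × Vtx n m s₁ s₂ =>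
          w.1.1 ≠ w.2.1 ∧ modArc occ w.1.1 w.2.1 ∧ ordM σ ι w.2.1 < ordM σ ι w.1.1).filter
            fun w => (w.1.1, w.2.1) = p).card
          ≤ (Finset.univ.filter fun w : Vtx n m s₁ s₂ × Vtx n m s₁ s₂ =>
            (w.1.1, w.2.1) = p).card :=
          Finset.card_le_card (Finset.filter_subset_filter _ (Finset.filter_subset _ _))
        _ = msize n m s₁ s₂ p.1 * msize n m s₁ s₂ p.2 := hfib p
        _ = wgt occ σ ι s₁ s₂ p.1 p.2 := (wgt_eq_of_cond hp).symm
    have hifun : ∀ i : Fin n, σ i = false → (i : ℕ) ≠ n - 1 := by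
      intro i hf hieq
      have hieq2 : i = ⟨n - 1, Nat.sub_lt hn one_pos⟩ := Fin.ext hieq
      rw [hieq2, hxn] at hf
      exact absurd hf (by decide)
    have hmain : (∑ M : ModName n m, ∑ N : ModName n m, wgt occ σ ι s₁ s₂ M N) ≤
        n * s₁ ^ 2 + 2 * (n - k) * s₁ + (3 * n - 1) * m * s₁ * s₂ + m ^ 2 * s₂ ^ 2 +
          9 * m * (n - 1) * s₂ := by
      rw [sum_modName (fun M => ∑ N : ModName n m, wgt occ σ ι s₁ s₂ M N)]
      have hVins : ∀ i : Fin n, ∀ r : Fin 6,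
          (∑ N : ModName n m, wgt occ σ ι s₁ s₂ (Vm i r) N)
            = (∑ i' : Fin n, ∑ r' : Fin 6, wgt occ σ ι s₁ s₂ (Vm i r) (Vm i' r')) +
              ∑ j : Fin m, wgt occ σ ι s₁ s₂ (Vm i r) (.T j) := fun i r => sum_modName _
      have hTins : ∀ j : Fin m,
          (∑ N : ModName n m, wgt occ σ ι s₁ s₂ (.T j) N)
            = (∑ i : Fin n, ∑ r : Fin 6, wgt occ σ ι s₁ s₂ (.T j) (Vm i r)) +
              ∑ j' : Fin m, wgt occ σ ι s₁ s₂ (.T j) (.T j') := fun j => sum_modName _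
      simp only [hVins, hTins]
      simp only [Finset.sum_add_distrib]
      have hP1 : (∑ i : Fin n, ∑ r : Fin 6, ∑ i' : Fin n, ∑ r' : Fin 6,
          wgt occ σ ι s₁ s₂ (Vm i r) (Vm i' r')) ≤ n * (s₁ * s₁) + (n - k) * (2 * s₁) := by
        have hswap : ∀ i : Fin n, (∑ r : Fin 6, ∑ i' : Fin n, ∑ r' : Fin 6,
            wgt occ σ ι s₁ s₂ (Vm i r) (Vm i' r'))
              = ∑ i' : Fin n, ∑ r : Fin 6, ∑ r' : Fin 6,
                wgt occ σ ι s₁ s₂ (Vm i r) (Vm i' r') := fun i => Finset.sum_comm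
        simp only [hswap]
        have hdiag : ∀ i : Fin n, (∑ i' : Fin n, ∑ r : Fin 6, ∑ r' : Fin 6,
            wgt occ σ ι s₁ s₂ (Vm i r) (Vm i' r'))
              = ∑ r : Fin 6, ∑ r' : Fin 6, wgt occ σ ι s₁ s₂ (Vm i r) (Vm i r') := by
          intro i
          rw [Finset.sum_eq_single i]
          · intro b _ hb
            exact vv_off occ σ ι i b (Ne.symm hb)
          · intro h
            exact absurd (Finset.mem_univ i) h
        simp only [hdiag]
        have hite : (∑ i : Fin n, if σ i then 0 else 2 * s₁) = (n - k) * (2 * s₁) := by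
          have hcard : (Finset.univ.filter fun i : Fin n => ¬ σ i = true).card = n - k := by
            have h1 := Finset.card_filter_add_card_filter_not
              (s := (Finset.univ : Finset (Fin n))) (p := fun i : Fin n => σ i = true)
            have hk2 : (Finset.univ.filter fun i : Fin n => σ i = true).card = k := hk
            rw [Finset.card_univ, Fintype.card_fin] at h1
            omega
          rw [Finset.sum_ite, Finset.sum_const, Finset.sum_const, smul_eq_mul, smul_eq_mul,
            Nat.mul_zero, Nat.zero_add, hcard]
        calc (∑ i : Fin n, ∑ r : Fin 6, ∑ r' : Fin 6, wgt occ σ ι s₁ s₂ (Vm i r) (Vm i r'))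
            ≤ ∑ i : Fin n, (s₁ * s₁ + (if σ i then 0 else 2 * s₁)) :=
              Finset.sum_le_sum (fun i _ => vv_diag occ σ ι i (hifun i))
          _ = n * (s₁ * s₁) + (n - k) * (2 * s₁) := by
              rw [Finset.sum_add_distrib, Finset.sum_const, Finset.card_univ, Fintype.card_fin,
                smul_eq_mul, hite]
      have hP23 : (∑ i : Fin n, ∑ r : Fin 6, ∑ j : Fin m, wgt occ σ ι s₁ s₂ (Vm i r) (.T j))
            + (∑ j : Fin m, ∑ i : Fin n, ∑ r : Fin 6, wgt occ σ ι s₁ s₂ (.T j) (Vm i r))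
          ≤ m * (2 * (s₁ * s₂) + (n - 1) * (3 * (s₁ * s₂) + 3 * s₂)) := by
        have hsw0 : ∀ i : Fin n, (∑ r : Fin 6, ∑ j : Fin m, wgt occ σ ι s₁ s₂ (Vm i r) (.T j))
            = ∑ j : Fin m, ∑ r : Fin 6, wgt occ σ ι s₁ s₂ (Vm i r) (.T j) :=
          fun i => Finset.sum_comm
        have hsw1 : (∑ i : Fin n, ∑ r : Fin 6, ∑ j : Fin m, wgt occ σ ι s₁ s₂ (Vm i r) (.T j))
            = ∑ j : Fin m, ∑ i : Fin n, ∑ r : Fin 6, wgt occ σ ι s₁ s₂ (Vm i r) (.T j) := by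
          simp only [hsw0]
          exact Finset.sum_comm
        have hitesum : ∀ j : Fin m,
            (∑ i : Fin n, if i = ι j then 2 * (s₁ * s₂) else 3 * (s₁ * s₂) + 3 * s₂)
              ≤ 2 * (s₁ * s₂) + (n - 1) * (3 * (s₁ * s₂) + 3 * s₂) := by
          intro j
          rw [← Finset.add_sum_erase _ _ (Finset.mem_univ (ι j)), if_pos rfl]
          refine Nat.add_le_add_left ?_ _
          calc (∑ i ∈ Finset.univ.erase (ι j),
                if i = ι j then 2 * (s₁ * s₂) else 3 * (s₁ * s₂) + 3 * s₂)
              = ∑ _i ∈ Finset.univ.erase (ι j), (3 * (s₁ * s₂) + 3 * s₂) :=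
                Finset.sum_congr rfl (fun i hi => if_neg (Finset.ne_of_mem_erase hi))
            _ = (Finset.univ.erase (ι j)).card * (3 * (s₁ * s₂) + 3 * s₂) := by
                rw [Finset.sum_const, smul_eq_mul]
            _ = (n - 1) * (3 * (s₁ * s₂) + 3 * s₂) := by
                rw [Finset.card_erase_of_mem (Finset.mem_univ _), Finset.card_univ,
                  Fintype.card_fin]
            _ ≤ (n - 1) * (3 * (s₁ * s₂) + 3 * s₂) := le_rfl
        rw [hsw1, ← Finset.sum_add_distrib]
        calc (∑ j : Fin m, ((∑ i : Fin n, ∑ r : Fin 6, wgt occ σ ι s₁ s₂ (Vm i r) (.T j)) +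
              ∑ i : Fin n, ∑ r : Fin 6, wgt occ σ ι s₁ s₂ (.T j) (Vm i r)))
            = ∑ j : Fin m, ∑ i : Fin n, ((∑ r : Fin 6, wgt occ σ ι s₁ s₂ (.T j) (Vm i r)) +
              ∑ r : Fin 6, wgt occ σ ι s₁ s₂ (Vm i r) (.T j)) := by
              refine Finset.sum_congr rfl (fun j _ => ?_)
              rw [← Finset.sum_add_distrib]
              refine Finset.sum_congr rfl (fun i _ => ?_)
              rw [Nat.add_comm]
          _ ≤ ∑ j : Fin m, ∑ i : Fin n,
                (if i = ι j then 2 * (s₁ * s₂) else 3 * (s₁ * s₂) + 3 * s₂) :=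
              Finset.sum_le_sum (fun j _ => Finset.sum_le_sum
                (fun i _ => tv_bound occ σ ι j i (hok j)))
          _ ≤ ∑ _j : Fin m, (2 * (s₁ * s₂) + (n - 1) * (3 * (s₁ * s₂) + 3 * s₂)) :=
              Finset.sum_le_sum (fun j _ => hitesum j)
          _ = m * (2 * (s₁ * s₂) + (n - 1) * (3 * (s₁ * s₂) + 3 * s₂)) := by
              rw [Finset.sum_const, Finset.card_univ, Fintype.card_fin, smul_eq_mul]
      have hP4 : (∑ j : Fin m, ∑ j' : Fin m, wgt occ σ ι s₁ s₂ (.T j) (.T j'))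
          ≤ m * (m * (s₂ * s₂)) := by
        calc (∑ j : Fin m, ∑ j' : Fin m, wgt occ σ ι s₁ s₂ (.T j) (.T j'))
            ≤ ∑ _j : Fin m, ∑ _j' : Fin m, s₂ * s₂ :=
              Finset.sum_le_sum (fun j _ => Finset.sum_le_sum (fun j' _ => wgt_le))
          _ = m * (m * (s₂ * s₂)) := by
              simp [Finset.sum_const, Finset.card_univ, mul_assoc]
      have hfin : n * (s₁ * s₁) + (n - k) * (2 * s₁) +
            m * (2 * (s₁ * s₂) + (n - 1) * (3 * (s₁ * s₂) + 3 * s₂)) + m * (m * (s₂ * s₂))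
          ≤ n * s₁ ^ 2 + 2 * (n - k) * s₁ + (3 * n - 1) * m * s₁ * s₂ + m ^ 2 * s₂ ^ 2 +
            9 * m * (n - 1) * s₂ := by
        have h3n : 3 * n - 1 = 3 * (n - 1) + 2 := by omega
        rw [h3n]
        have e1 : n * (s₁ * s₁) = n * s₁ ^ 2 := by ring
        have e2 : (n - k) * (2 * s₁) = 2 * (n - k) * s₁ := by ring
        have e3 : m * (2 * (s₁ * s₂) + (n - 1) * (3 * (s₁ * s₂) + 3 * s₂))
            = (3 * (n - 1) + 2) * m * s₁ * s₂ + 3 * (m * ((n - 1) * s₂)) := by ring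
        have e4 : m * (m * (s₂ * s₂)) = m ^ 2 * s₂ ^ 2 := by ring
        have e5 : 9 * m * (n - 1) * s₂ = 9 * (m * ((n - 1) * s₂)) := by ring
        omega
      omega
    calc (∑ p ∈ (Finset.univ.filter fun p : ModName n m × ModName n m =>
            p.1 ≠ p.2 ∧ modArc occ p.1 p.2 ∧ ordM σ ι p.2 < ordM σ ι p.1),
          ((Finset.univ.filter fun w : Vtx n m s₁ s₂ × Vtx n m s₁ s₂ =>
            w.1.1 ≠ w.2.1 ∧ modArc occ w.1.1 w.2.1 ∧ ordM σ ι w.2.1 < ordM σ ι w.1.1).filter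
              fun w => (w.1.1, w.2.1) = p).card)
        ≤ ∑ p ∈ (Finset.univ.filter fun p : ModName n m × ModName n m =>
            p.1 ≠ p.2 ∧ modArc occ p.1 p.2 ∧ ordM σ ι p.2 < ordM σ ι p.1),
          wgt occ σ ι s₁ s₂ p.1 p.2 := Finset.sum_le_sum hstep
      _ ≤ ∑ p : ModName n m × ModName n m, wgt occ σ ι s₁ s₂ p.1 p.2 :=
          Finset.sum_le_sum_of_subset (Finset.filter_subset _ _)
      _ = ∑ M : ModName n m, ∑ N : ModName n m, wgt occ σ ι s₁ s₂ M N :=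
          Fintype.sum_prod_type' (f := fun M N => wgt occ σ ι s₁ s₂ M N)
      _ ≤ _ := hmain
end

section
/- An assignment σ' to the variables y_i^j satisfies φ' if and only if for every i ∈ {1,…,n} the values σ'(y_i^1),…,σ'(y_i^m) are all equal and the assignment σ defined by σ(x_i) = σ'(y_i^1) satisfies φ; moreover, in that case the weight of σ' equals m times the weight of σ. -/
/-- `σ'` satisfies the clauses of `R`: `(¬y_i^j ∨ y_i^{j+1})` for `1 ≤ j ≤ m−1` together
with `(¬y_i^m ∨ y_i^1)`, i.e. cyclically `σ' i j = true → σ' i (j+1) = true`. -/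
def SatR {n m : ℕ} [NeZero m] (σ' : Fin n → Fin m → Bool) : Prop :=
  ∀ i : Fin n, ∀ j : Fin m, σ' i j = true → σ' i (j + 1) = true

/-- `σ'` satisfies the clauses of `L`: the clauses of `φ` with `x_i` in `c_j` replaced
by `y_i^j`. -/
def SatL {n m : ℕ} (occ : Fin n → Fin m → Option Bool) (σ' : Fin n → Fin m → Bool) : Prop :=
  ∀ j : Fin m, ∃ i : Fin n,
    (occ i j = some true ∧ σ' i j = true) ∨ (occ i j = some false ∧ σ' i j = false)

/-- `σ'` satisfies `φ'`. -/
def Sat' {n m : ℕ} [NeZero m] (occ : Fin n → Fin m → Option Bool)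
    (σ' : Fin n → Fin m → Bool) : Prop :=
  SatR σ' ∧ SatL occ σ'

/-- The weight of an assignment to `φ'`. -/
def wt' {n m : ℕ} (σ' : Fin n → Fin m → Bool) : ℕ :=
  (Finset.univ.filter (fun p : Fin n × Fin m => σ' p.1 p.2 = true)).card

open Fin.NatCast in
lemma satR_const {n m : ℕ} [NeZero m] {σ' : Fin n → Fin m → Bool} (h : SatR σ') :
    ∀ i : Fin n, ∀ j j' : Fin m, σ' i j = σ' i j' := by
  have key : ∀ i : Fin n, ∀ j : Fin m, σ' i j = true → ∀ j' : Fin m, σ' i j' = true := by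
    intro i j hj j'
    have step : ∀ k : ℕ, σ' i (j + (k : Fin m)) = true := by
      intro k
      induction k with
      | zero => simpa using hj
      | succ k ih =>
        have : ((k + 1 : ℕ) : Fin m) = (k : Fin m) + 1 := by push_cast; ring
        rw [this, ← add_assoc]
        exact h i _ ih
    have := step (j' - j).val
    rwa [Fin.cast_val_eq_self, add_sub_cancel] at this
  intro i j j'
  cases hj : σ' i j with
  | true => exact (key i j hj j').symm
  | false =>
    cases hj' : σ' i j' with
    | true => rw [key i j' hj' j] at hj; exact hj.symm ▸ rfl
    | false => rfl

/-- `σ'` satisfies `φ'` iff for each `i` all the values `σ' i j` are equal and the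
assignment `σ i = σ' i 0` (i.e. `σ(x_i) = σ'(y_i^1)`) satisfies `φ`; in that case
`wt' σ' = m * wt σ`. -/
theorem stmt17 (n m : ℕ) [NeZero m] (occ : Fin n → Fin m → Option Bool)
    (hallF : ∀ j : Fin m, ∃ i : Fin n, occ i j = some false)
    (σ' : Fin n → Fin m → Bool) :
    (Sat' occ σ' ↔
      ((∀ i : Fin n, ∀ j j' : Fin m, σ' i j = σ' i j') ∧
        Sat occ (fun i => σ' i 0))) ∧
    (Sat' occ σ' → wt' σ' = m * wt (fun i => σ' i 0)) := by
  constructor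
  · constructor
    · rintro ⟨hR, hL⟩
      have hc := satR_const hR
      refine ⟨hc, fun j => ?_⟩
      obtain ⟨i, hi⟩ := hL j
      refine ⟨i, ?_⟩
      rcases hi with ⟨h1, h2⟩ | ⟨h1, h2⟩
      · exact Or.inl ⟨h1, (hc i 0 j).trans h2⟩
      · exact Or.inr ⟨h1, (hc i 0 j).trans h2⟩
    · rintro ⟨hc, hS⟩
      refine ⟨fun i j hj => (hc i (j + 1) j).trans hj, fun j => ?_⟩
      obtain ⟨i, hi⟩ := hS j
      refine ⟨i, ?_⟩
      rcases hi with ⟨h1, h2⟩ | ⟨h1, h2⟩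
      · exact Or.inl ⟨h1, (hc i j 0).trans h2⟩
      · exact Or.inr ⟨h1, (hc i j 0).trans h2⟩
  · intro hs
    have hc := satR_const hs.1
    unfold wt' wt
    rw [Finset.card_filter, Finset.card_filter, Fintype.sum_prod_type]
    rw [Finset.mul_sum]
    refine Finset.sum_congr rfl fun i _ => ?_
    calc ∑ j : Fin m, (if σ' i j = true then 1 else 0)
        = ∑ _j : Fin m, (if σ' i 0 = true then 1 else 0) := by
          refine Finset.sum_congr rfl fun j _ => by rw [hc i j 0]
      _ = m * (if σ' i 0 = true then 1 else 0) := by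
          rw [Finset.sum_const, Finset.card_univ, Fintype.card_fin, smul_eq_mul]
end
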